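/- arXiv:2401.08942 — 6 statements merged into one kernel-verified Lean document; each statement's English description precedes it below -/
import Mathlib

section
/- Let G be a complete r-partite graph with parts V_1, ..., V_r where V_r is a part of maximum size. If the sum of the sizes of V_1, ..., V_{r-1} equals |V_r| - 1, then G contains a Hamiltonian path. -/
open SimpleGraph Finset

/-- The kipas `K̂ₙ`: a path on the vertices `0, …, n-1` together with the hub `n`
joined to every path vertex. -/
def kipas (n : ℕ) : SimpleGraph (Fin (n+1)) :=
  SimpleGraph.fromRel (fun u v => (u.val + 1 = v.val ∧ v.val < n) ∨ (u.val < n ∧ v.val = n))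

/-- A monochromatic copy (in color `c`) of the graph `H` in an edge-coloring `χ`
of the complete graph on `V`. -/
def HasMonoCopy {α V C : Type*} (H : SimpleGraph α) (χ : V → V → C) (c : C) : Prop :=
  ∃ f : α ↪ V, ∀ a b, H.Adj a b → χ (f a) (f b) = c

/-- A rainbow copy of the graph `G` in an edge-coloring `χ` of the complete graph on `V`:
distinct edges of the copy receive distinct colors. -/
def HasRainbowCopy {α V C : Type*} (G : SimpleGraph α) (χ : V → V → C) : Prop :=
  ∃ f : α ↪ V, ∀ a b a' b', G.Adj a b → G.Adj a' b' →
    χ (f a) (f b) = χ (f a') (f b') → s(a, b) = s(a', b')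

/-- An edge-coloring uses exactly the colors `1, …, k`. -/
def UsesExactly {V : Type*} (k : ℕ) (χ : V → V → ℕ) : Prop :=
  (∀ u v, u ≠ v → χ u v ∈ Finset.Icc 1 k) ∧
    ∀ c ∈ Finset.Icc 1 k, ∃ u v, u ≠ v ∧ χ u v = c

/-- `grProp G H k N` : every symmetric edge-coloring of `K_{n'}` with `n' ≥ N` using exactly
`k` colors contains a rainbow copy of `G` or a monochromatic copy of `H`. -/
def grProp {α β : Type*} (G : SimpleGraph α) (H : SimpleGraph β) (k N : ℕ) : Prop :=
  ∀ n, N ≤ n → ∀ χ : Fin n → Fin n → ℕ, (∀ u v, χ u v = χ v u) →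
    UsesExactly k χ → HasRainbowCopy G χ ∨ ∃ c, HasMonoCopy H χ c

/-- A monochromatic (color `c`) linear forest, all of whose components are paths on at
least `t` vertices, with at least `m` edges in total. -/
def HasMonoLinearForest {V C : Type*} (χ : V → V → C) (c : C) (t m : ℕ) : Prop :=
  ∃ paths : List (List V),
    paths.flatten.Nodup ∧
    (∀ p ∈ paths, t ≤ p.length) ∧
    (∀ p ∈ paths, p.Chain' (fun u v => χ u v = c)) ∧
    m ≤ (paths.map (fun p => p.length - 1)).sum


lemma walk_of_chain {V : Type*} (G : SimpleGraph V) :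
    ∀ (l : List V) (a : V), List.Chain G.Adj a l →
    ∃ (b : V) (p : G.Walk a b), p.support = a :: l := by
  intro l
  induction l with
  | nil => intro a _; exact ⟨a, SimpleGraph.Walk.nil, rfl⟩
  | cons b l ih =>
      intro a h
      rw [List.Chain, List.chain_cons] at h
      obtain ⟨c, p, hp⟩ := ih b h.2
      exact ⟨c, SimpleGraph.Walk.cons h.1 p, by simp [hp]⟩

lemma walk_of_chain' {V : Type*} (G : SimpleGraph V) (l : List V) (hne : l ≠ [])
    (h : l.Chain' G.Adj) : ∃ (a b : V) (p : G.Walk a b), p.support = l := by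
  cases l with
  | nil => exact absurd rfl hne
  | cons a t =>
      obtain ⟨b, p, hp⟩ := walk_of_chain G t a h
      exact ⟨a, b, p, hp⟩


/-- A complete multipartite graph whose parts are all nonempty, whose last part
has maximum size, and where the sizes of the other parts sum to exactly the size of the last
part minus one, contains a Hamiltonian path. -/
theorem completeMultipartite_hamiltonianPath (r : ℕ) (n : Fin (r+1) → ℕ)
    (hpos : ∀ i, 1 ≤ n i)
    (hmax : ∀ i, n i ≤ n (Fin.last r))
    (hsum : (∑ i : Fin r, n i.castSucc) + 1 = n (Fin.last r)) :
    ∃ (u v : Σ i, Fin (n i)) (p : (completeMultipartiteGraph (fun i => Fin (n i))).Walk u v),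
      p.IsHamiltonian := by
  classical
  set m := n (Fin.last r) with hm
  set S := ∑ i : Fin r, n i.castSucc with hS
  have hm1 : 1 ≤ m := hpos _
  have hcard : Fintype.card (Σ i : Fin r, Fin (n i.castSucc)) = S := by
    simp [Fintype.card_sigma, hS]
  let e : (Σ i : Fin r, Fin (n i.castSucc)) ≃ Fin S := Fintype.equivFinOfCardEq hcard
  have hemb : Function.Injective
      (fun s : Σ i : Fin r, Fin (n i.castSucc) => (⟨s.1.castSucc, s.2⟩ : Σ i, Fin (n i))) := by
    rintro ⟨i, x⟩ ⟨j, y⟩ h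
    have hij : i = j := Fin.castSucc_injective _ (congrArg Sigma.fst h)
    subst hij
    have hxy : (x : ℕ) = (y : ℕ) := congrArg (fun z : Σ i, Fin (n i) => (z.2 : ℕ)) h
    exact congrArg _ (Fin.ext hxy)
  let f : Fin (m + S) → (Σ i, Fin (n i)) := fun k =>
    if h : k.val % 2 = 0 then
      ⟨Fin.last r, ⟨k.val / 2, by have hk := k.isLt; omega⟩⟩
    else
      ⟨(e.symm ⟨k.val / 2, by have hk := k.isLt; omega⟩).1.castSucc,
        (e.symm ⟨k.val / 2, by have hk := k.isLt; omega⟩).2⟩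
  have hfst_even : ∀ (k : Fin (m + S)) (h : k.val % 2 = 0), (f k).1 = Fin.last r := by
    intro k h; simp only [f, dif_pos h]
  have hfst_odd : ∀ (k : Fin (m + S)) (h : ¬ k.val % 2 = 0), (f k).1 ≠ Fin.last r := by
    intro k h
    simp only [f, dif_neg h]
    exact Fin.ne_of_lt (Fin.castSucc_lt_last _)
  have hinj : Function.Injective f := by
    intro a b hab
    by_cases ha : a.val % 2 = 0 <;> by_cases hb : b.val % 2 = 0
    · simp only [f, dif_pos ha, dif_pos hb] at hab
      have : a.val / 2 = b.val / 2 := congrArg (fun z : Σ i, Fin (n i) => (z.2 : ℕ)) hab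
      exact Fin.ext (by omega)
    · exact absurd ((hfst_even a ha) ▸ congrArg Sigma.fst hab) (Ne.symm (hfst_odd b hb))
    · exact absurd ((hfst_even b hb) ▸ (congrArg Sigma.fst hab).symm) (Ne.symm (hfst_odd a ha))
    · simp only [f, dif_neg ha, dif_neg hb] at hab
      have h1 := hemb hab
      have h2 := e.symm.injective h1
      have h3 : a.val / 2 = b.val / 2 := congrArg Fin.val h2
      exact Fin.ext (by omega)
  have hsurj : Function.Surjective f := by
    rintro ⟨i, x⟩
    by_cases hi : i = Fin.last r
    · subst hi
      refine ⟨⟨2 * x.val, by have := x.isLt; omega⟩, ?_⟩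
      have hpar : (2 * x.val) % 2 = 0 := by omega
      simp only [f, dif_pos hpar]
      exact congrArg (fun y => (⟨Fin.last r, y⟩ : Σ i, Fin (n i)))
        (Fin.ext (show 2 * x.val / 2 = x.val by omega))
    · obtain ⟨j, rfl⟩ := Fin.exists_castSucc_eq.mpr hi
      refine ⟨⟨2 * (e ⟨j, x⟩).val + 1, by have := (e ⟨j, x⟩).isLt; omega⟩, ?_⟩
      have hpar : ¬ (2 * (e ⟨j, x⟩).val + 1) % 2 = 0 := by omega
      simp only [f, dif_neg hpar]
      have ht : (⟨(2 * (e ⟨j, x⟩).val + 1) / 2, by have := (e ⟨j, x⟩).isLt; omega⟩ : Fin S)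
          = e ⟨j, x⟩ := Fin.ext (show (2 * (e ⟨j, x⟩).val + 1) / 2 = (e ⟨j, x⟩).val by omega)
      rw [ht, e.symm_apply_apply]
  have hadj : ∀ (i : ℕ) (hi : i + 1 < m + S),
      (completeMultipartiteGraph (fun i => Fin (n i))).Adj
        (f ⟨i, Nat.lt_of_succ_lt hi⟩) (f ⟨i + 1, hi⟩) := by
    intro i hi
    simp only [comap_adj, top_adj]
    by_cases h : i % 2 = 0
    · have h' : ¬ (i + 1) % 2 = 0 := by omega
      rw [hfst_even ⟨i, _⟩ h]
      exact (hfst_odd ⟨i + 1, hi⟩ h').symm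
    · have h' : (i + 1) % 2 = 0 := by omega
      rw [hfst_even ⟨i + 1, hi⟩ h']
      exact hfst_odd ⟨i, _⟩ h
  have hchain : (List.ofFn f).Chain' (completeMultipartiteGraph (fun i => Fin (n i))).Adj :=
    List.isChain_ofFn.mpr hadj
  have hne : List.ofFn f ≠ [] := by
    simp only [ne_eq, List.ofFn_eq_nil_iff]
    omega
  obtain ⟨a, b, p, hp⟩ := walk_of_chain' _ _ hne hchain
  refine ⟨a, b, p, ?_⟩
  intro v
  rw [hp]
  apply List.count_eq_one_of_mem
  · exact (List.nodup_ofFn).mpr hinj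
  · rw [List.mem_ofFn]
    exact hsurj v
end

section
/- For n ≥ 4, if the edges of the complete graph on n+1 vertices are 2-colored red/blue and there is no red copy of the kipas K̂_n, then there is either a blue copy of two vertex-disjoint edges (2P_2) or a blue path on 3 vertices (P_3). -/
open SimpleGraph Finset

/-- For `n ≥ 4`, any red/blue coloring of `K_{n+1}` (red = `true`) without a red
kipas `K̂ₙ` contains a blue `2P₂` or a blue `P₃`. -/
theorem blue_2P2_or_P3 (n : ℕ) (hn : 4 ≤ n)
    (χ : Fin (n+1) → Fin (n+1) → Bool) (hsym : ∀ u v, χ u v = χ v u)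
    (hred : ¬ HasMonoCopy (kipas n) χ true) :
    (∃ a b c d : Fin (n+1), [a, b, c, d].Nodup ∧ χ a b = false ∧ χ c d = false) ∨
    (∃ a b c : Fin (n+1), [a, b, c].Nodup ∧ χ a b = false ∧ χ b c = false) := by
  by_contra hcon
  push_neg at hcon
  obtain ⟨h2, h3⟩ := hcon
  -- uniqueness of the blue edge
  have uniq : ∀ u v u' v' : Fin (n+1), u ≠ v → u' ≠ v' → χ u v = false → χ u' v' = false →
      (u = u' ∧ v = v') ∨ (u = v' ∧ v = u') := by
    intro u v u' v' huv hu'v' hb hb'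
    by_cases e1 : u' = u
    · subst e1
      by_cases e2 : v' = v
      · subst e2; exact Or.inl ⟨rfl, rfl⟩
      · exfalso
        exact h3 v u' v' (by simp [huv.symm, e2, hu'v']; tauto)
          ((hsym v u').trans hb) hb'
    · by_cases e2 : u' = v
      · subst e2
        by_cases e3 : v' = u
        · subst e3; exact Or.inr ⟨rfl, rfl⟩
        · exfalso
          exact h3 u u' v' (by simp [huv, hu'v']; tauto) hb hb'
      · by_cases e3 : v' = u
        · subst e3
          exfalso
          exact h3 v v' u' (by simp [huv.symm, e2, hu'v']; tauto)
            ((hsym v v').trans hb) ((hsym v' u').trans hb')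
        · by_cases e4 : v' = v
          · subst e4
            exfalso
            exact h3 u v' u' (by simp [huv, e1, e2]; tauto) hb
              ((hsym v' u').trans hb')
          · exfalso
            exact h2 u v u' v'
              (by simp [huv, hu'v', e1, e2, e3, e4]; tauto) hb hb'
  by_cases hex : ∃ x y : Fin (n+1), x ≠ y ∧ χ x y = false
  · obtain ⟨x, y, hxy, hbl⟩ := hex
    set σ₁ := Equiv.swap (0 : Fin (n+1)) x with hσ₁
    have hv2 : ((2 : Fin (n+1)) : ℕ) = 2 := by
      show 2 % (n+1) = 2
      exact Nat.mod_eq_of_lt (by omega)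
    have h02 : (0 : Fin (n+1)) ≠ 2 := by
      intro h
      have := congrArg Fin.val h
      rw [hv2] at this
      simp at this
    have hy1 : σ₁ y ≠ 0 := by
      intro h
      apply hxy
      have := congrArg σ₁ h
      rw [Equiv.swap_apply_self, Equiv.swap_apply_left] at this
      exact this.symm
    set σ₂ := Equiv.swap (2 : Fin (n+1)) (σ₁ y) with hσ₂
    set σ := σ₂.trans σ₁ with hσ
    have hσ0 : σ 0 = x := by
      have h20 : σ₂ 0 = 0 :=
        Equiv.swap_apply_of_ne_of_ne h02 hy1.symm
      show σ₁ (σ₂ 0) = x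
      rw [h20, Equiv.swap_apply_left]
    have hσ2 : σ 2 = y := by
      show σ₁ (σ₂ 2) = y
      rw [Equiv.swap_apply_left, Equiv.swap_apply_self]
    apply hred
    refine ⟨σ.toEmbedding, ?_⟩
    intro a b hab
    cases hc : χ (σ a) (σ b) with
    | true => simpa using hc
    | false =>
      exfalso
      have hne : σ a ≠ σ b := fun h => hab.ne (σ.injective h)
      have hu := uniq (σ a) (σ b) x y hne hxy hc hbl
      -- deduce {a,b} = {0,2}
      have hab02 : (a = 0 ∧ b = 2) ∨ (a = 2 ∧ b = 0) := by
        rcases hu with ⟨ha, hb'⟩ | ⟨ha, hb'⟩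
        · exact Or.inl ⟨σ.injective (ha.trans hσ0.symm), σ.injective (hb'.trans hσ2.symm)⟩
        · exact Or.inr ⟨σ.injective (ha.trans hσ2.symm), σ.injective (hb'.trans hσ0.symm)⟩
      have hnadj : ¬ (kipas n).Adj 0 2 := by
        simp only [kipas, SimpleGraph.fromRel_adj]
        rintro ⟨-, (⟨h1, h2'⟩ | ⟨h1, h2'⟩) | (⟨h1, h2'⟩ | ⟨h1, h2'⟩)⟩ <;>
          simp only [Fin.val_zero, hv2] at h1 h2' <;> omega
      rcases hab02 with ⟨ha, hb'⟩ | ⟨ha, hb'⟩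
      · subst ha; subst hb'; exact hnadj hab
      · subst ha; subst hb'; exact hnadj hab.symm
  · push_neg at hex
    apply hred
    refine ⟨Function.Embedding.refl _, ?_⟩
    intro a b hab
    cases hc : χ a b with
    | true => simpa using hc
    | false => exact absurd hc (hex a b hab.ne)
end

section
/- For n ≥ 5, if the edges of the complete graph on n+2 vertices are 2-colored red/blue and there is no red copy of the kipas K̂_n, then there is a blue copy of one of: two vertex-disjoint paths P_3 ∪ P_3, a path P_5 on five vertices, or vertex-disjoint paths P_4 ∪ P_2. -/
open SimpleGraph Finset

lemma nodup5 {α : Type*} {a b c d e : α} (h1 : a ≠ b) (h2 : a ≠ c) (h3 : a ≠ d) (h4 : a ≠ e)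
    (h5 : b ≠ c) (h6 : b ≠ d) (h7 : b ≠ e) (h8 : c ≠ d) (h9 : c ≠ e) (h10 : d ≠ e) :
    ([a,b,c,d,e]).Nodup := by simp [*]
lemma nodup6 {α : Type*} {a b c d e f : α} (h1 : a ≠ b) (h2 : a ≠ c) (h3 : a ≠ d) (h4 : a ≠ e) (h5 : a ≠ f)
    (h6 : b ≠ c) (h7 : b ≠ d) (h8 : b ≠ e) (h9 : b ≠ f) (h10 : c ≠ d) (h11 : c ≠ e) (h12 : c ≠ f)
    (h13 : d ≠ e) (h14 : d ≠ f) (h15 : e ≠ f) : ([a,b,c,d,e,f]).Nodup := by simp [*]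
lemma red_of_not_blue {b : Bool} (h : ¬ b = false) : b = true := by cases b <;> simp_all
lemma exists_notMem {n : ℕ} (s : Finset (Fin n)) (h : s.card < n) : ∃ x, x ∉ s := by
  by_contra hc
  push_neg at hc
  have hsub : (univ : Finset (Fin n)) ⊆ s := fun x _ => hc x
  have := Finset.card_le_card hsub
  simp at this
  omega

/-- Hamiltonian path in the complement of a matching (by induction on size). -/
lemma mh {V : Type*} [DecidableEq V] (χ : V → V → Bool) (hsym : ∀ u v, χ u v = χ v u)
    (m : ℕ) : ∀ (s : Finset V), s.card = m → 1 ≤ m →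
    (∀ x ∈ s, ∀ y ∈ s, ∀ z ∈ s, y ≠ x → z ≠ x → y ≠ z → ¬(χ x y = false ∧ χ x z = false)) →
    (∃ l : List V, l.Nodup ∧ l.length = m ∧ (∀ x ∈ l, x ∈ s) ∧
      l.Chain' (fun u v => χ u v = true)) ∨
    (m = 2 ∧ ∃ a b, a ∈ s ∧ b ∈ s ∧ a ≠ b ∧ χ a b = false) := by
  induction m with
  | zero => intro s _ h1; omega
  | succ m ih =>
    intro s hcard h1 hmatch
    have hne : s.Nonempty := by rw [← Finset.card_pos]; omega
    obtain ⟨x, hx⟩ := hne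
    rcases Nat.eq_zero_or_pos m with hm0 | hm1
    · left
      exact ⟨[x], by simp, by simp [hm0], by simpa using hx, by simp [List.Chain']⟩
    · have hcard' : (s.erase x).card = m := by
        rw [Finset.card_erase_of_mem hx]; omega
      have hsub : s.erase x ⊆ s := Finset.erase_subset x s
      have hmatch' : ∀ x' ∈ s.erase x, ∀ y ∈ s.erase x, ∀ z ∈ s.erase x, y ≠ x' → z ≠ x' → y ≠ z →
          ¬(χ x' y = false ∧ χ x' z = false) := fun a ha b hb c hc => hmatch a (hsub ha) b (hsub hb) c (hsub hc)
      rcases ih (s.erase x) hcard' hm1 hmatch' with ⟨l, hnd, hlen, hmem, hch⟩ | ⟨hm2, a, b, ha, hb, hab, hblue⟩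
      · -- attach x to an end of l
        have hxl : x ∉ l := fun hxmem => (Finset.mem_erase.1 (hmem x hxmem)).1 rfl
        rcases l with _ | ⟨a, t⟩
        · simp at hlen; omega
        rcases t with _ | ⟨b, t⟩
        · -- l = [a]
          have ha : a ∈ s.erase x := hmem a (by simp)
          have hax : a ≠ x := (Finset.mem_erase.1 ha).1
          by_cases hred : χ x a = true
          · left
            refine ⟨[x, a], by simp [Ne.symm hax], by simp at hlen ⊢; omega, ?_, by simp [List.Chain', hred]⟩
            intro y hy
            rcases List.mem_cons.1 hy with rfl | hy'
            · exact hx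
            · simp at hy'; subst hy'; exact hsub ha
          · right
            refine ⟨by simp at hlen; omega, x, a, hx, hsub ha, Ne.symm hax, ?_⟩
            cases hxa : χ x a
            · rfl
            · exact absurd hxa hred
        · -- l = a :: b :: t, length ≥ 2
          have ha : a ∈ s.erase x := hmem a (by simp)
          have hax : a ≠ x := (Finset.mem_erase.1 ha).1
          have htne : (b :: t) ≠ [] := by simp
          have hltmem : (b :: t).getLast htne ∈ b :: t := List.getLast_mem _
          have hltmem' : (b :: t).getLast htne ∈ s.erase x := hmem _ (List.mem_cons_of_mem _ hltmem)
          have hltx : (b :: t).getLast htne ≠ x := (Finset.mem_erase.1 hltmem').1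
          have halt : a ≠ (b :: t).getLast htne := by
            intro h
            have hnd' := List.nodup_cons.1 hnd
            exact hnd'.1 (h ▸ hltmem)
          by_cases hreda : χ x a = true
          · left
            refine ⟨x :: a :: b :: t, List.nodup_cons.2 ⟨hxl, hnd⟩, by simp at hlen ⊢; omega, ?_,
              List.isChain_cons_cons.2 ⟨hreda, hch⟩⟩
            intro y hy
            rcases List.mem_cons.1 hy with rfl | hy'
            · exact hx
            · exact hsub (hmem y hy')
          · by_cases hredl : χ x ((b :: t).getLast htne) = true
            · left
              refine ⟨(a :: b :: t) ++ [x], ?_, by simp at hlen ⊢; omega, ?_, ?_⟩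
              · rw [List.nodup_append]
                exact ⟨hnd, by simp, by intro y hy; simp; intro h; subst h; exact hxl hy⟩
              · intro y hy
                rcases List.mem_append.1 hy with hy' | hy'
                · exact hsub (hmem y hy')
                · simp at hy'; subst hy'; exact hx
              · refine List.isChain_append.2 ?_
                refine ⟨hch, by simp, ?_⟩
                intro p hp q hq
                simp at hq; subst hq
                rw [List.getLast?_eq_getLast (l := a :: b :: t) (by simp)] at hp
                simp at hp
                rw [hsym]
                convert hredl using 2
                exact hp.symm
            · exfalso
              have hcb1 : χ x a = false := by cases h' : χ x a; rfl; exact absurd h' hreda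
              have hcb2 : χ x ((b :: t).getLast htne) = false := by
                cases h' : χ x ((b :: t).getLast htne); rfl; exact absurd h' hredl
              exact hmatch x hx a (hsub ha) _ (hsub hltmem') hax hltx halt ⟨hcb1, hcb2⟩
      · -- s.erase x = blue pair {a,b}; use [a, x, b]
        left
        have hax : a ≠ x := (Finset.mem_erase.1 ha).1
        have hbx : b ≠ x := (Finset.mem_erase.1 hb).1
        have hba : χ b a = false := by rw [hsym]; exact hblue
        have hxa : χ a x = true := by
          apply red_of_not_blue
      
        
        
        
        
        
          intro hfalse
          exact hmatch a (hsub ha) b (hsub hb) x hx hab.symm hax.symm hbx ⟨hblue, hfalse⟩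
        have hxb : χ x b = true := by
          rw [hsym]
          apply red_of_not_blue
          intro hfalse
          exact hmatch b (hsub hb) a (hsub ha) x hx hab hbx.symm hax ⟨hba, hfalse⟩
        refine ⟨[a, x, b], by simp [hax, Ne.symm hbx, hab], by simp; omega, ?_, by simp [List.Chain', hxa, hxb]⟩
        intro y hy
        simp at hy
        rcases hy with rfl | rfl | rfl
        · exact hsub ha
        · exact hx
        · exact hsub hb

lemma build_kipas (n : ℕ) (χ : Fin (n+2) → Fin (n+2) → Bool) (hsym : ∀ u v, χ u v = χ v u)
    (h : Fin (n+2)) (l : List (Fin (n+2))) (hlen : l.length = n) (hnd : l.Nodup)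
    (hhl : h ∉ l) (hch : l.Chain' (fun u v => χ u v = true))
    (hhub : ∀ x ∈ l, χ h x = true) : HasMonoCopy (kipas n) χ true := by
  have hget : ∀ (i : ℕ) (hi : i < n), i < l.length := fun i hi => by omega
  set f : Fin (n+1) → Fin (n+2) := fun i =>
    if hi : (i : ℕ) < n then l.get ⟨i, hget i hi⟩ else h with hf
  have hinj : Function.Injective f := by
    intro i j hij
    simp only [hf] at hij
    by_cases hi : (i : ℕ) < n <;> by_cases hj : (j : ℕ) < n
    · rw [dif_pos hi, dif_pos hj] at hij
      have := (List.Nodup.get_inj_iff hnd).1 hij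
      have := Fin.mk.injEq .. ▸ this
      exact Fin.ext (by simpa using this)
    · rw [dif_pos hi, dif_neg hj] at hij
      exact absurd (hij ▸ List.get_mem l _) hhl
    · rw [dif_neg hi, dif_pos hj] at hij
      exact absurd (hij.symm ▸ List.get_mem l _) hhl
    · have : (i : ℕ) = n := by omega
      have : (i : ℕ) = (j : ℕ) := by omega
      exact Fin.ext this
  refine ⟨⟨f, hinj⟩, ?_⟩
  intro a b hadj
  rw [kipas, SimpleGraph.fromRel_adj] at hadj
  obtain ⟨hne, hrel⟩ := hadj
  have hchain : ∀ (i : ℕ) (hi : i + 1 < n), χ (l.get ⟨i, hget i (by omega)⟩)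
      (l.get ⟨i+1, hget (i+1) hi⟩) = true := by
    intro i hi
    have := List.isChain_iff_getElem.1 hch i (by omega)
    convert this using 2 <;> simp
  have key : ∀ a b : Fin (n+1), (a : ℕ) + 1 = (b : ℕ) → (b : ℕ) < n →
      χ (f a) (f b) = true := by
    intro a b h1 h2
    have ha : (a : ℕ) < n := by omega
    simp only [hf, dif_pos ha, dif_pos h2]
    have : (⟨(b : ℕ), hget _ h2⟩ : Fin l.length) = ⟨(a : ℕ)+1, hget _ (h1 ▸ h2)⟩ := by
      apply Fin.ext; simp [h1.symm]
    rw [this]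
    exact hchain a (by omega)
  have keyhub : ∀ a b : Fin (n+1), (a : ℕ) < n → (b : ℕ) = n → χ (f a) (f b) = true := by
    intro a b h1 h2
    simp only [hf, dif_pos h1, dif_neg (by omega : ¬ (b:ℕ) < n)]
    rw [hsym]
    exact hhub _ (List.get_mem l _)
  rcases hrel with (⟨h1, h2⟩ | ⟨h1, h2⟩) | (⟨h1, h2⟩ | ⟨h1, h2⟩)
  · exact key a b h1 h2
  · exact keyhub a b h1 h2
  · rw [hsym]; exact key b a h1 h2
  · rw [hsym]; exact keyhub b a h1 h2

lemma gl2 (n : ℕ) (hn : 5 ≤ n) (χ : Fin (n+2) → Fin (n+2) → Bool) (hsym : ∀ u v, χ u v = χ v u)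
    (h t1 t2 t3 : Fin (n+2)) (D : Finset (Fin (n+2)))
    (hcard : D.card = n - 3)
    (hhD' : h ∉ D) (ht1D : t1 ∉ D) (ht2D : t2 ∉ D) (ht3D : t3 ∉ D)
    (hht1 : h ≠ t1) (hht2 : h ≠ t2) (hht3 : h ≠ t3)
    (ht12 : t1 ≠ t2) (ht13 : t1 ≠ t3) (ht23 : t2 ≠ t3)
    (hhT1 : χ h t1 = true) (hhT2 : χ h t2 = true) (hhT3 : χ h t3 = true)
    (hhD : ∀ x ∈ D, χ h x = true)
    (hcross : ∀ x ∈ D, χ t1 x = true ∧ χ t2 x = true ∧ χ t3 x = true)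
    (hmatch : ∀ x ∈ D, ∀ y ∈ D, ∀ z ∈ D, y ≠ x → z ≠ x → y ≠ z →
      ¬(χ x y = false ∧ χ x z = false)) :
    HasMonoCopy (kipas n) χ true := by
  rcases Nat.lt_or_ge D.card 3 with hsmall | hbig
  · -- D.card = 2, n = 5
    have hc2 : D.card = 2 := by omega
    have hn5 : n = 5 := by omega
    obtain ⟨a, b, hab, hD⟩ := Finset.card_eq_two.1 hc2
    have haD : a ∈ D := by rw [hD]; simp
    have hbD : b ∈ D := by rw [hD]; simp
    apply build_kipas n χ hsym h [t1, a, t3, b, t2]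
    · simp; omega
    · have h1 : t1 ≠ a := fun he => ht1D (he ▸ haD)
      have h2 : t1 ≠ b := fun he => ht1D (he ▸ hbD)
      have h3 : t3 ≠ a := fun he => ht3D (he ▸ haD)
      have h4 : t3 ≠ b := fun he => ht3D (he ▸ hbD)
      have h5 : t2 ≠ a := fun he => ht2D (he ▸ haD)
      have h6 : t2 ≠ b := fun he => ht2D (he ▸ hbD)
      simp [h1, h2, h3, h4, h5, h6, Ne.symm h3, Ne.symm h4, Ne.symm h5, Ne.symm h6, hab, ht12, ht13, ht23, Ne.symm ht23]
    · intro hmem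
      simp at hmem
      rcases hmem with rfl | rfl | rfl | rfl | rfl
      · exact hht1 rfl
      · exact hhD' haD
      · exact hht3 rfl
      · exact hhD' hbD
      · exact hht2 rfl
    · refine List.isChain_cons_cons.2 ⟨(hcross a haD).1, ?_⟩
      refine List.isChain_cons_cons.2 ⟨by rw [hsym]; exact (hcross a haD).2.2, ?_⟩
      refine List.isChain_cons_cons.2 ⟨(hcross b hbD).2.2, ?_⟩
      refine List.isChain_cons_cons.2 ⟨by rw [hsym]; exact (hcross b hbD).2.1, ?_⟩
      simp
    · intro x hx
      simp at hx
      rcases hx with rfl | rfl | rfl | rfl | rfl <;>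
        first | exact hhT1 | exact hhT3 | exact hhT2 | exact hhD _ haD | exact hhD _ hbD
  · -- D.card ≥ 3
    rcases mh χ hsym D.card D rfl (by omega) hmatch with ⟨l, hnd, hlen, hmem, hch⟩ | ⟨hm2, _⟩
    · rcases l with _ | ⟨y1, l'⟩
      · simp at hlen; omega
      rcases l' with _ | ⟨y2, rest⟩
      · simp at hlen; omega
      -- final list
      have hy1D : y1 ∈ D := hmem y1 (by simp)
      have hmemD : ∀ x ∈ y2 :: rest, x ∈ D := fun x hx => hmem x (List.mem_cons_of_mem _ hx)
      have ht2nmem : t2 ∉ y2 :: rest := fun hmem' => ht2D (hmemD _ hmem')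
      have hndtail : (y2 :: rest).Nodup := (List.nodup_cons.1 hnd).2
      have happnd : ((y2 :: rest) ++ [t2]).Nodup := by
        rw [List.nodup_append]
        exact ⟨hndtail, by simp, by intro y hy; simp; intro he; subst he; exact ht2nmem hy⟩
      have htail3 : ∀ x ∈ (y2 :: rest) ++ [t2], x ∈ D ∨ x = t2 := by
        intro x hx
        rcases List.mem_append.1 hx with hx | hx
        · exact Or.inl (hmemD x hx)
        · simp at hx; exact Or.inr hx
      apply build_kipas n χ hsym h (t1 :: y1 :: t3 :: ((y2 :: rest) ++ [t2]))
      · simp at hlen ⊢; omega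
      · refine List.nodup_cons.2 ⟨?_, List.nodup_cons.2 ⟨?_, List.nodup_cons.2 ⟨?_, happnd⟩⟩⟩
        · intro hmem'
          rcases List.mem_cons.1 hmem' with he | hmem'
          · exact ht1D (he ▸ hy1D)
          rcases List.mem_cons.1 hmem' with he | hmem'
          · exact ht13 he
          rcases htail3 _ hmem' with hD' | he
          · exact ht1D hD'
          · exact ht12 he
        · intro hmem'
          rcases List.mem_cons.1 hmem' with he | hmem'
          · exact ht3D (he ▸ hy1D)
          rcases List.mem_append.1 hmem' with hy | hy
          · exact (List.nodup_cons.1 hnd).1 hy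
          · simp at hy; exact ht2D (hy ▸ hy1D)
        · intro hmem'
          rcases htail3 _ hmem' with hD' | he
          · exact ht3D hD'
          · exact ht23 he.symm
      · intro hmem'
        rcases List.mem_cons.1 hmem' with he | hmem'
        · exact hht1 he
        rcases List.mem_cons.1 hmem' with he | hmem'
        · exact hhD' (he ▸ hy1D)
        rcases List.mem_cons.1 hmem' with he | hmem'
        · exact hht3 he
        rcases htail3 _ hmem' with hD' | he
        · exact hhD' hD'
        · exact hht2 he
      · refine List.isChain_cons_cons.2 ⟨(hcross y1 hy1D).1, ?_⟩
        refine List.isChain_cons_cons.2 ⟨by rw [hsym]; exact (hcross y1 hy1D).2.2, ?_⟩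
        refine List.isChain_cons.2 ⟨?_, ?_⟩
        · intro y hy
          simp at hy
          subst hy
          exact (hcross y2 (hmemD y2 (by simp))).2.2
        · rw [List.isChain_append]
          refine ⟨List.IsChain.tail hch, by simp, ?_⟩
          intro p hp q hq
          simp at hq
          subst hq
          have hpmem : p ∈ y2 :: rest := by
            have := List.getLast?_eq_getLast (l := y2 :: rest) (by simp)
            rw [this] at hp
            simp at hp
            rw [← hp]
            exact List.getLast_mem _
          rw [hsym]
          exact (hcross p (hmemD p hpmem)).2.1
      · intro x hx
        rcases List.mem_cons.1 hx with rfl | hx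
        · exact hhT1
        rcases List.mem_cons.1 hx with rfl | hx
        · exact hhD _ hy1D
        rcases List.mem_cons.1 hx with rfl | hx
        · exact hhT3
        rcases htail3 _ hx with hD' | rfl
        · exact hhD _ hD'
        · exact hhT2
    · omega

section Struct
variable {V : Type*} {χ : V → V → Bool}

def IsP4 (χ : V → V → Bool) : Prop :=
  ∃ a b c d : V, (a ≠ b ∧ a ≠ c ∧ a ≠ d ∧ b ≠ c ∧ b ≠ d ∧ c ≠ d) ∧
    χ a b = false ∧ χ b c = false ∧ χ c d = false

/-- A blue P3 plus a pendant blue edge at one of its endpoints gives a blue P4. -/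
lemma pend (hsym : ∀ u v, χ u v = χ v u) {x y z c w : V} (hxy : χ x y = false) (hyz : χ y z = false)
    (hxyne : x ≠ y) (hyzne : y ≠ z) (hxz : x ≠ z)
    (hcw : χ c w = false) (hc : c = x ∨ c = z) (hw1 : w ≠ x) (hw2 : w ≠ y) (hw3 : w ≠ z) :
    IsP4 χ := by
  rcases hc with rfl | rfl
  · exact ⟨z, y, c, w, ⟨hyzne.symm, hxz.symm, Ne.symm hw3, hxyne.symm, Ne.symm hw2, Ne.symm hw1⟩,
      by rw [hsym]; exact hyz, by rw [hsym]; exact hxy, hcw⟩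
  · exact ⟨x, y, c, w, ⟨hxyne, hxz, Ne.symm hw1, hyzne, Ne.symm hw2, Ne.symm hw3⟩, hxy, hyz, hcw⟩

/-- Two blue P3s, the second avoiding the center of the first, give a blue P4
(or two disjoint blue P3s, excluded by `no2P3`). -/
lemma getP4 (hsym : ∀ u v, χ u v = χ v u)
    (no2P3 : ∀ a b c d e f : V, [a,b,c,d,e,f].Nodup → χ a b = false → χ b c = false →
      χ d e = false → χ e f = false → False)
    {x y z x' y' z' : V}
    (hxy : χ x y = false) (hyz : χ y z = false)
    (hxyne : x ≠ y) (hyzne : y ≠ z) (hxz : x ≠ z)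
    (h1' : χ x' y' = false) (h2' : χ y' z' = false)
    (hne1 : x' ≠ y') (hne2 : y' ≠ z') (hne3 : x' ≠ z')
    (hy1 : x' ≠ y) (hy2 : y' ≠ y) (hy3 : z' ≠ y) :
    IsP4 χ := by
  by_cases h1 : y' = x ∨ y' = z
  · by_cases h2 : x' = x ∨ x' = z
    · -- x', y' ∈ {x, z}, so z' avoids {x, y, z}; pendant edge y'–z' at y' ∈ {x,z}
      have hz'x : z' ≠ x := by
        rcases h1 with rfl | rfl
        · exact hne2.symm
        · rcases h2 with rfl | rfl
          · exact hne3.symm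
          · exact absurd rfl hne1
      have hz'z : z' ≠ z := by
        rcases h1 with rfl | rfl
        · rcases h2 with rfl | rfl
          · exact absurd rfl hne1
          · exact hne3.symm
        · exact hne2.symm
      exact pend hsym hxy hyz hxyne hyzne hxz h2' h1 hz'x hy3 hz'z
    · -- pendant edge y'–x' at y' ∈ {x, z}
      push_neg at h2
      exact pend hsym hxy hyz hxyne hyzne hxz (by rw [hsym]; exact h1') h1 h2.1 hy1 h2.2
  · push_neg at h1
    by_cases h2 : x' = x ∨ x' = z
    · exact pend hsym hxy hyz hxyne hyzne hxz h1' h2 h1.1 hy2 h1.2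
    · push_neg at h2
      by_cases h3 : z' = x ∨ z' = z
      · exact pend hsym hxy hyz hxyne hyzne hxz (by rw [hsym]; exact h2') h3 h1.1 hy2 h1.2
      · push_neg at h3
        exact absurd (no2P3 x y z x' y' z'
          (nodup6 hxyne hxz (Ne.symm h2.1) (Ne.symm h1.1) (Ne.symm h3.1)
            hyzne (Ne.symm hy1) (Ne.symm hy2) (Ne.symm hy3)
            (Ne.symm h2.2) (Ne.symm h1.2) (Ne.symm h3.2) hne1 hne3 hne2)
          hxy hyz h1' h2') id
end Struct

section Struct2
variable {V : Type*} {χ : V → V → Bool}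

def StructConc (χ : V → V → Bool) : Prop :=
  (∃ v : V, ∀ x y z, x ≠ v → y ≠ v → z ≠ v → x ≠ y → x ≠ z → y ≠ z →
      ¬(χ x y = false ∧ χ y z = false)) ∨
  (∃ a b c d : V, (a ≠ b ∧ a ≠ c ∧ a ≠ d ∧ b ≠ c ∧ b ≠ d ∧ c ≠ d) ∧
      ∀ x y, x ≠ y → χ x y = false → (x = a ∨ x = b ∨ x = c ∨ x = d))

lemma p4an (hsym : ∀ u v, χ u v = χ v u)
    (noP5 : ∀ a b c d e : V, [a,b,c,d,e].Nodup → χ a b = false → χ b c = false →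
      χ c d = false → χ d e = false → False)
    (no2P3 : ∀ a b c d e f : V, [a,b,c,d,e,f].Nodup → χ a b = false → χ b c = false →
      χ d e = false → χ e f = false → False)
    (noP4P2 : ∀ a b c d e f : V, [a,b,c,d,e,f].Nodup → χ a b = false → χ b c = false →
      χ c d = false → χ e f = false → False)
    (hP4 : IsP4 χ) : StructConc χ := by
  obtain ⟨a, b, c, d, ⟨d1, d2, d3, d4, d5, d6⟩, e1, e2, e3⟩ := hP4
  by_cases hb : ∃ w, (w ≠ a ∧ w ≠ b ∧ w ≠ c ∧ w ≠ d) ∧ χ b w = false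
  · by_cases hc : ∃ w, (w ≠ a ∧ w ≠ b ∧ w ≠ c ∧ w ≠ d) ∧ χ c w = false
    · -- both b and c have outside blue neighbours : contradiction
      obtain ⟨w, ⟨wa, wb, wc, wd⟩, hbw⟩ := hb
      obtain ⟨w', ⟨wa', wb', wc', wd'⟩, hcw'⟩ := hc
      by_cases hww : w = w'
      · subst hww
        exact absurd (noP5 a b w c d
          (nodup5 d1 (Ne.symm wa) d2 d3 (Ne.symm wb) d4 d5 wc wd d6)
          e1 hbw (by rw [hsym]; exact hcw') e3) id
      · exact absurd (no2P3 a b w d c w'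
          (nodup6 d1 (Ne.symm wa) d3 d2 (Ne.symm wa') (Ne.symm wb) d5 d4 (Ne.symm wb')
            wd wc hww d6.symm (Ne.symm wd') (Ne.symm wc'))
          e1 hbw (by rw [hsym]; exact e3) hcw') id
    · -- only b has outside blue neighbours: v = b
      obtain ⟨w, ⟨wa, wb, wc, wd⟩, hbw⟩ := hb
      push_neg at hc
      have G1 : ¬ χ a c = false := fun hac => noP5 w b a c d
        (nodup5 wb wa wc wd d1.symm d4 d5 d2 d3 d6)
        (by rw [hsym]; exact hbw) (by rw [hsym]; exact e1) hac e3
      have G2 : ¬ χ a d = false := fun had => noP5 w b c d a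
        (nodup5 wb wc wd wa d4 d5 d1.symm d6 d2.symm d3.symm)
        (by rw [hsym]; exact hbw) e2 e3 (by rw [hsym]; exact had)
      have ec : ∀ x y, x ≠ y → x ≠ b → y ≠ b → χ x y = false →
          ((x = c ∧ y = d) ∨ (x = d ∧ y = c)) := by
        intro x y hxy hxb hyb hblue
        by_cases hxa : x = a
        · subst hxa
          by_cases hyc : y = c
          · subst hyc; exact absurd hblue G1
          by_cases hyd : y = d
          · subst hyd; exact absurd hblue G2
          · exact absurd (noP5 y x b c d
              (nodup5 hxy.symm hyb hyc hyd d1 d2 d3 d4 d5 d6)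
              (by rw [hsym]; exact hblue) e1 e2 e3) id
        by_cases hxc : x = c
        · subst hxc
          by_cases hya : y = a
          · subst hya; exact absurd (by rw [hsym]; exact hblue) G1
          by_cases hyd : y = d
          · subst hyd; exact Or.inl ⟨rfl, rfl⟩
          · exact absurd (hc y ⟨hya, hyb, hxy.symm, hyd⟩ hblue) id
        by_cases hxd : x = d
        · subst hxd
          by_cases hya : y = a
          · subst hya; exact absurd (by rw [hsym]; exact hblue) G2
          by_cases hyc : y = c
          · subst hyc; exact Or.inr ⟨rfl, rfl⟩
          · exact absurd (noP5 a b c x y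
              (nodup5 d1 d2 d3 (Ne.symm hya) d4 d5 (Ne.symm hyb) d6 (Ne.symm hyc) hxy)
              e1 e2 e3 hblue) id
        · -- x outside
          by_cases hya : y = a
          · subst hya
            exact absurd (noP5 x y b c d
              (nodup5 hxy hxb hxc hxd d1 d2 d3 d4 d5 d6) hblue e1 e2 e3) id
          by_cases hyc : y = c
          · subst hyc
            exact absurd (hc x ⟨hxa, hxb, hxy, hxd⟩ (by rw [hsym]; exact hblue)) id
          by_cases hyd : y = d
          · subst hyd
            exact absurd (noP5 a b c y x
              (nodup5 d1 d2 d3 (Ne.symm hxa) d4 d5 (Ne.symm hxb) d6 (Ne.symm hxc) hxy.symm)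
              e1 e2 e3 (by rw [hsym]; exact hblue)) id
          · exact absurd (noP4P2 a b c d x y
              (nodup6 d1 d2 d3 (Ne.symm hxa) (Ne.symm hya) d4 d5 (Ne.symm hxb) (Ne.symm hyb)
                d6 (Ne.symm hxc) (Ne.symm hyc) (Ne.symm hxd) (Ne.symm hyd) hxy)
              e1 e2 e3 hblue) id
      left
      refine ⟨b, fun x y z hxb hyb hzb hxy hxz hyz ⟨u1, u2⟩ => ?_⟩
      rcases ec x y hxy hxb hyb u1 with ⟨hx, hy⟩ | ⟨hx, hy⟩ <;>
        rcases ec y z hyz hyb hzb u2 with ⟨hy', hz⟩ | ⟨hy', hz⟩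
      · exact (d6 (hy'.symm.trans hy)).elim
      · exact hxz (hx.trans hz.symm) |>.elim
      · exact hxz (hx.trans hz.symm) |>.elim
      · exact (d6 (hy.symm.trans hy')).elim
  · by_cases hc : ∃ w, (w ≠ a ∧ w ≠ b ∧ w ≠ c ∧ w ≠ d) ∧ χ c w = false
    · -- only c: v = c
      obtain ⟨w, ⟨wa, wb, wc, wd⟩, hcw⟩ := hc
      push_neg at hb
      have G1 : ¬ χ b d = false := fun hbd => noP5 w c d b a
        (nodup5 wc wd wb wa d6 d4.symm d2.symm d5.symm d3.symm d1.symm)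
        (by rw [hsym]; exact hcw) e3 (by rw [hsym]; exact hbd) (by rw [hsym]; exact e1)
      have G2 : ¬ χ a d = false := fun had => noP5 w c b a d
        (nodup5 wc wb wa wd d4.symm d2.symm d6 d1.symm d5 d3)
        (by rw [hsym]; exact hcw) (by rw [hsym]; exact e2) (by rw [hsym]; exact e1) had
      have ec : ∀ x y, x ≠ y → x ≠ c → y ≠ c → χ x y = false →
          ((x = a ∧ y = b) ∨ (x = b ∧ y = a)) := by
        intro x y hxy hxc hyc hblue
        by_cases hxa : x = a
        · subst hxa
          by_cases hyb : y = b
          · subst hyb; exact Or.inl ⟨rfl, rfl⟩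
          by_cases hyd : y = d
          · subst hyd; exact absurd hblue G2
          · exact absurd (noP5 y x b c d
              (nodup5 hxy.symm hyb hyc hyd d1 d2 d3 d4 d5 d6)
              (by rw [hsym]; exact hblue) e1 e2 e3) id
        by_cases hxb : x = b
        · subst hxb
          by_cases hya : y = a
          · subst hya; exact Or.inr ⟨rfl, rfl⟩
          by_cases hyd : y = d
          · subst hyd; exact absurd hblue G1
          · exact absurd (hb y ⟨hya, hxy.symm, hyc, hyd⟩ hblue) id
        by_cases hxd : x = d
        · subst hxd
          by_cases hya : y = a
          · subst hya; exact absurd (by rw [hsym]; exact hblue) G2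
          by_cases hyb : y = b
          · subst hyb; exact absurd (by rw [hsym]; exact hblue) G1
          · exact absurd (noP5 a b c x y
              (nodup5 d1 d2 d3 (Ne.symm hya) d4 d5 (Ne.symm hyb) d6 hyc.symm hxy)
              e1 e2 e3 hblue) id
        · by_cases hya : y = a
          · subst hya
            exact absurd (noP5 x y b c d
              (nodup5 hxy hxb hxc hxd d1 d2 d3 d4 d5 d6) hblue e1 e2 e3) id
          by_cases hyb : y = b
          · subst hyb
            exact absurd (hb x ⟨hxa, hxy, hxc, hxd⟩ (by rw [hsym]; exact hblue)) id
          by_cases hyd : y = d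
          · subst hyd
            exact absurd (noP5 a b c y x
              (nodup5 d1 d2 d3 (Ne.symm hxa) d4 d5 (Ne.symm hxb) d6 (Ne.symm hxc) hxy.symm)
              e1 e2 e3 (by rw [hsym]; exact hblue)) id
          · exact absurd (noP4P2 a b c d x y
              (nodup6 d1 d2 d3 (Ne.symm hxa) (Ne.symm hya) d4 d5 (Ne.symm hxb) (Ne.symm hyb)
                d6 (Ne.symm hxc) (Ne.symm hyc) (Ne.symm hxd) (Ne.symm hyd) hxy)
              e1 e2 e3 hblue) id
      left
      refine ⟨c, fun x y z hxc hyc hzc hxy hxz hyz ⟨u1, u2⟩ => ?_⟩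
      rcases ec x y hxy hxc hyc u1 with ⟨hx, hy⟩ | ⟨hx, hy⟩ <;>
        rcases ec y z hyz hyc hzc u2 with ⟨hy', hz⟩ | ⟨hy', hz⟩
      · exact (d1 (hy'.symm.trans hy)).elim
      · exact hxz (hx.trans hz.symm) |>.elim
      · exact hxz (hx.trans hz.symm) |>.elim
      · exact (d1 (hy.symm.trans hy')).elim
    · -- neither: blue confined to {a,b,c,d}
      push_neg at hb hc
      right
      refine ⟨a, b, c, d, ⟨d1, d2, d3, d4, d5, d6⟩, ?_⟩
      intro x y hxy hblue
      by_cases hxa : x = a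
      · exact Or.inl hxa
      by_cases hxb : x = b
      · exact Or.inr (Or.inl hxb)
      by_cases hxc : x = c
      · exact Or.inr (Or.inr (Or.inl hxc))
      by_cases hxd : x = d
      · exact Or.inr (Or.inr (Or.inr hxd))
      exfalso
      by_cases hya : y = a
      · subst hya
        exact noP5 x y b c d (nodup5 hxy hxb hxc hxd d1 d2 d3 d4 d5 d6) hblue e1 e2 e3
      by_cases hyb : y = b
      · subst hyb
        exact hb x ⟨hxa, hxy, hxc, hxd⟩ (by rw [hsym]; exact hblue)
      by_cases hyc : y = c
      · subst hyc
        exact hc x ⟨hxa, hxb, hxy, hxd⟩ (by rw [hsym]; exact hblue)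
      by_cases hyd : y = d
      · subst hyd
        exact noP5 a b c y x
          (nodup5 d1 d2 d3 (Ne.symm hxa) d4 d5 (Ne.symm hxb) d6 (Ne.symm hxc) hxy.symm)
          e1 e2 e3 (by rw [hsym]; exact hblue)
      · exact noP4P2 a b c d x y
          (nodup6 d1 d2 d3 (Ne.symm hxa) (Ne.symm hya) d4 d5 (Ne.symm hxb) (Ne.symm hyb)
            d6 (Ne.symm hxc) (Ne.symm hyc) (Ne.symm hxd) (Ne.symm hyd) hxy)
          e1 e2 e3 hblue

lemma struct [Nonempty V] (hsym : ∀ u v, χ u v = χ v u)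
    (noP5 : ∀ a b c d e : V, [a,b,c,d,e].Nodup → χ a b = false → χ b c = false →
      χ c d = false → χ d e = false → False)
    (no2P3 : ∀ a b c d e f : V, [a,b,c,d,e,f].Nodup → χ a b = false → χ b c = false →
      χ d e = false → χ e f = false → False)
    (noP4P2 : ∀ a b c d e f : V, [a,b,c,d,e,f].Nodup → χ a b = false → χ b c = false →
      χ c d = false → χ e f = false → False) : StructConc χ := by
  by_cases hP3 : ∃ x y z : V, x ≠ y ∧ y ≠ z ∧ x ≠ z ∧ χ x y = false ∧ χ y z = false
  · obtain ⟨x, y, z, hxy, hyz, hxz, e1, e2⟩ := hP3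
    by_cases hQ : ∃ p q r : V, p ≠ q ∧ q ≠ r ∧ p ≠ r ∧ p ≠ y ∧ q ≠ y ∧ r ≠ y ∧
        χ p q = false ∧ χ q r = false
    · obtain ⟨p, q, r, f1, f2, f3, f4, f5, f6, g1, g2⟩ := hQ
      exact p4an hsym noP5 no2P3 noP4P2
        (getP4 hsym no2P3 e1 e2 hxy hyz hxz g1 g2 f1 f2 f3 f4 f5 f6)
    · left
      refine ⟨y, fun p q r hp hq hr hpq hpr hqr ⟨u1, u2⟩ =>
        hQ ⟨p, q, r, hpq, hqr, hpr, hp, hq, hr, u1, u2⟩⟩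
  · left
    refine ⟨Classical.arbitrary V, fun p q r _ _ _ hpq hpr hqr ⟨u1, u2⟩ =>
      hP3 ⟨p, q, r, hpq, hqr, hpr, u1, u2⟩⟩
end Struct2

lemma master (n : ℕ) (hn : 5 ≤ n) (χ : Fin (n+2) → Fin (n+2) → Bool)
    (hsym : ∀ u v, χ u v = χ v u)
    (noP5 : ∀ a b c d e : Fin (n+2), [a,b,c,d,e].Nodup → χ a b = false → χ b c = false →
      χ c d = false → χ d e = false → False)
    (no2P3 : ∀ a b c d e f : Fin (n+2), [a,b,c,d,e,f].Nodup → χ a b = false → χ b c = false →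
      χ d e = false → χ e f = false → False)
    (noP4P2 : ∀ a b c d e f : Fin (n+2), [a,b,c,d,e,f].Nodup → χ a b = false → χ b c = false →
      χ c d = false → χ e f = false → False) :
    HasMonoCopy (kipas n) χ true := by
  have hcu : (Finset.univ : Finset (Fin (n+2))).card = n + 2 := by simp
  rcases struct hsym noP5 no2P3 noP4P2 with ⟨v, hv⟩ | ⟨a, b, c, d, ⟨d1, d2, d3, d4, d5, d6⟩, hconf⟩
  · -- blue minus v is a matching
    by_cases hunm : ∃ h : Fin (n+2), h ≠ v ∧ ∀ y, y ≠ h → y ≠ v → χ h y = true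
    · obtain ⟨h, hhv, hh⟩ := hunm
      set D := (Finset.univ.erase v).erase h with hD
      have hmemD : ∀ x, x ∈ D ↔ (x ≠ h ∧ x ≠ v) := by
        intro x; simp [hD, Finset.mem_erase]
      have h2 : D.card = n := by
        rw [hD, Finset.card_erase_of_mem (by simp [Finset.mem_erase, hhv]),
          Finset.card_erase_of_mem (Finset.mem_univ v), hcu]
        omega
      have hmatchD : ∀ x ∈ D, ∀ y ∈ D, ∀ z ∈ D, y ≠ x → z ≠ x → y ≠ z →
          ¬(χ x y = false ∧ χ x z = false) := by
        intro x hx y hy z hz hyx hzx hyz ⟨u1, u2⟩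
        exact hv y x z ((hmemD y).1 hy).2 ((hmemD x).1 hx).2 ((hmemD z).1 hz).2
          hyx hyz (Ne.symm hzx) ⟨by rw [hsym]; exact u1, u2⟩
      rcases mh χ hsym n D h2 (by omega) hmatchD with ⟨l, hnd, hlen, hmem, hch⟩ | ⟨h2', _⟩
      · exact build_kipas n χ hsym h l hlen hnd
          (fun hmem' => ((hmemD h).1 (hmem h hmem')).1 rfl) hch
          (fun x hx => hh x ((hmemD x).1 (hmem x hx)).1 ((hmemD x).1 (hmem x hx)).2)
      · omega
    · push_neg at hunm
      have hpart : ∀ h : Fin (n+2), h ≠ v → ∃ y, y ≠ h ∧ y ≠ v ∧ χ h y = false := by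
        intro h hh
        obtain ⟨y, h1, h2, h3⟩ := hunm h hh
        refine ⟨y, h1, h2, ?_⟩
        cases hxy : χ h y
        · rfl
        · exact absurd hxy h3
      -- find the special pair p q and the property hvonly
      have key : ∃ p q : Fin (n+2), p ≠ v ∧ q ≠ v ∧ p ≠ q ∧ χ p q = false ∧
          ∀ y, y ≠ v → y ≠ p → y ≠ q → χ v y = true := by
        by_cases hvb : ∃ x, x ≠ v ∧ χ v x = false
        · obtain ⟨p, hpv, hvp⟩ := hvb
          obtain ⟨q, hqp, hqv, epq⟩ := hpart p hpv
          refine ⟨p, q, hpv, hqv, Ne.symm hqp, epq, ?_⟩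
          intro y hyv hyp hyq
          apply red_of_not_blue
          intro hvy
          obtain ⟨m, hmy, hmv, hym⟩ := hpart y hyv
          have hmp : m ≠ p := fun he => hv q p y hqv hpv hyv hqp (Ne.symm hyq) (Ne.symm hyp)
              ⟨by rw [hsym]; exact epq, by rw [hsym, ← he]; exact hym⟩
          have hmq : m ≠ q := fun he => hv p q y hpv hqv hyv (Ne.symm hqp) (Ne.symm hyp) (Ne.symm hyq)
              ⟨epq, by rw [hsym, ← he]; exact hym⟩
          exact noP5 m y v p q
            (nodup5 hmy hmv hmp hmq hyv hyp hyq (Ne.symm hpv) (Ne.symm hqv) (Ne.symm hqp))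
            (by rw [hsym]; exact hym) (by rw [hsym]; exact hvy) hvp epq
        · push_neg at hvb
          obtain ⟨p, hp⟩ := exists_notMem ({v} : Finset (Fin (n+2))) (by simp)
          have hpv : p ≠ v := by simpa using hp
          obtain ⟨q, hqp, hqv, epq⟩ := hpart p hpv
          exact ⟨p, q, hpv, hqv, Ne.symm hqp, epq,
            fun y hyv _ _ => red_of_not_blue (hvb y hyv)⟩
      obtain ⟨p, q, hpv, hqv, hpq, epq, hvonly⟩ := key
      have hc3 : ({v, p, q} : Finset (Fin (n+2))).card ≤ 3 := by
        apply (Finset.card_insert_le _ _).trans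
        apply Nat.succ_le_succ
        apply (Finset.card_insert_le _ _).trans
        apply Nat.succ_le_succ
        simp
      obtain ⟨h, hh⟩ := exists_notMem ({v, p, q} : Finset (Fin (n+2))) (by omega)
      have hhv : h ≠ v := by intro he; exact hh (by simp [he])
      have hhp : h ≠ p := by intro he; exact hh (by simp [he])
      have hhq : h ≠ q := by intro he; exact hh (by simp [he])
      obtain ⟨mhh, hmh_ne, hmhv, ehm⟩ := hpart h hhv
      have hmhp : mhh ≠ p := fun he => hv q p h hqv hpv hhv hpq.symm (Ne.symm hhq) (Ne.symm hhp)
          ⟨by rw [hsym]; exact epq, by rw [← he, hsym]; exact ehm⟩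
      have hmhq : mhh ≠ q := fun he => hv p q h hpv hqv hhv hpq (Ne.symm hhp) (Ne.symm hhq)
          ⟨epq, by rw [← he, hsym]; exact ehm⟩
      set S := ({v, p, q, h, mhh} : Finset (Fin (n+2))) with hS
      have hScard : S.card = 5 := by
        rw [hS]
        rw [Finset.card_insert_of_notMem (by simp [hpv.symm, hqv.symm, hhv.symm, hmhv.symm])]
        rw [Finset.card_insert_of_notMem (by simp [hpq, hhp.symm, hmhp.symm])]
        rw [Finset.card_insert_of_notMem (by simp [hhq.symm, hmhq.symm])]
        rw [Finset.card_insert_of_notMem (by simp [Ne.symm hmh_ne])]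
        simp
      set D := Finset.univ \ S with hD
      have hmemD : ∀ x, x ∈ D ↔ (x ≠ v ∧ x ≠ p ∧ x ≠ q ∧ x ≠ h ∧ x ≠ mhh) := by
        intro x; simp only [hD, hS, Finset.mem_sdiff, Finset.mem_univ, true_and, Finset.mem_insert, Finset.mem_singleton, not_or]
      have hDcard : D.card = n - 3 := by
        rw [hD, Finset.card_sdiff_of_subset (Finset.subset_univ S), hScard, hcu]
        omega
      apply gl2 n hn χ hsym h v p q D hDcard
      · intro hmem'; exact ((hmemD h).1 hmem').2.2.2.1 rfl
      · intro hmem'; exact ((hmemD v).1 hmem').1 rfl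
      · intro hmem'; exact ((hmemD p).1 hmem').2.1 rfl
      · intro hmem'; exact ((hmemD q).1 hmem').2.2.1 rfl
      · exact hhv
      · exact hhp
      · exact hhq
      · exact Ne.symm hpv
      · exact Ne.symm hqv
      · exact hpq
      · rw [hsym]; exact hvonly h hhv hhp hhq
      · apply red_of_not_blue
        intro hblue
        exact hv mhh h p hmhv hhv hpv (Ne.symm hmh_ne).symm hmhp (Ne.symm hhp).symm
          ⟨by rw [hsym]; exact ehm, hblue⟩
      · apply red_of_not_blue
        intro hblue
        exact hv mhh h q hmhv hhv hqv (Ne.symm hmh_ne).symm hmhq (Ne.symm hhq).symm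
          ⟨by rw [hsym]; exact ehm, hblue⟩
      · intro x hx
        obtain ⟨hxv, hxp, hxq, hxh, hxm⟩ := (hmemD x).1 hx
        apply red_of_not_blue
        intro hblue
        exact hv mhh h x hmhv hhv hxv (Ne.symm hmh_ne).symm (Ne.symm hxm) (Ne.symm hxh)
          ⟨by rw [hsym]; exact ehm, hblue⟩
      · intro x hx
        obtain ⟨hxv, hxp, hxq, hxh, hxm⟩ := (hmemD x).1 hx
        refine ⟨hvonly x hxv hxp hxq, ?_, ?_⟩
        · apply red_of_not_blue
          intro hblue
          exact hv q p x hqv hpv hxv hpq.symm (Ne.symm hxq) (Ne.symm hxp)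
            ⟨by rw [hsym]; exact epq, hblue⟩
        · apply red_of_not_blue
          intro hblue
          exact hv p q x hpv hqv hxv hpq (Ne.symm hxp) (Ne.symm hxq)
            ⟨epq, hblue⟩
      · intro x hx y hy z hz hyx hzx hyz ⟨u1, u2⟩
        exact hv y x z ((hmemD y).1 hy).1 ((hmemD x).1 hx).1 ((hmemD z).1 hz).1
          hyx hyz (Ne.symm hzx) ⟨by rw [hsym]; exact u1, u2⟩
  · -- blue confined to {a,b,c,d}
    have redout : ∀ x y : Fin (n+2), x ≠ y → ¬(x = a ∨ x = b ∨ x = c ∨ x = d) →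
        χ x y = true := by
      intro x y hxy hnx
      apply red_of_not_blue
      intro hblue
      exact hnx (hconf x y hxy hblue)
    have hc4 : ({a, b, c, d} : Finset (Fin (n+2))).card ≤ 4 := by
      apply (Finset.card_insert_le _ _).trans
      apply Nat.succ_le_succ
      apply (Finset.card_insert_le _ _).trans
      apply Nat.succ_le_succ
      apply (Finset.card_insert_le _ _).trans
      apply Nat.succ_le_succ
      simp
    obtain ⟨h, hh⟩ := exists_notMem ({a, b, c, d} : Finset (Fin (n+2))) (by omega)
    have hhF : ¬(h = a ∨ h = b ∨ h = c ∨ h = d) := by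
      intro hmem'; exact hh (by simp; tauto)
    have hha : h ≠ a := fun he => hhF (Or.inl he)
    have hhb : h ≠ b := fun he => hhF (Or.inr (Or.inl he))
    have hhc : h ≠ c := fun he => hhF (Or.inr (Or.inr (Or.inl he)))
    have hhd : h ≠ d := fun he => hhF (Or.inr (Or.inr (Or.inr he)))
    set S := ({a, b, c, d, h} : Finset (Fin (n+2))) with hS
    have hScard : S.card = 5 := by
      rw [hS]
      rw [Finset.card_insert_of_notMem (by simp [d1, d2, d3, hha.symm])]
      rw [Finset.card_insert_of_notMem (by simp [d4, d5, hhb.symm])]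
      rw [Finset.card_insert_of_notMem (by simp [d6, hhc.symm])]
      rw [Finset.card_insert_of_notMem (by simp [hhd.symm])]
      simp
    set D := Finset.univ \ S with hD
    have hmemD : ∀ x, x ∈ D ↔ (x ≠ a ∧ x ≠ b ∧ x ≠ c ∧ x ≠ d ∧ x ≠ h) := by
      intro x; simp only [hD, hS, Finset.mem_sdiff, Finset.mem_univ, true_and, Finset.mem_insert, Finset.mem_singleton, not_or]
    have hDcard : D.card = n - 3 := by
      rw [hD, Finset.card_sdiff_of_subset (Finset.subset_univ S), hScard, hcu]
      omega
    apply gl2 n hn χ hsym h a b c D hDcard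
    · intro hmem'; exact ((hmemD h).1 hmem').2.2.2.2 rfl
    · intro hmem'; exact ((hmemD a).1 hmem').1 rfl
    · intro hmem'; exact ((hmemD b).1 hmem').2.1 rfl
    · intro hmem'; exact ((hmemD c).1 hmem').2.2.1 rfl
    · exact hha
    · exact hhb
    · exact hhc
    · exact d1
    · exact d2
    · exact d4
    · exact redout h a hha hhF
    · exact redout h b hhb hhF
    · exact redout h c hhc hhF
    · intro x hx
      exact redout h x (Ne.symm ((hmemD x).1 hx).2.2.2.2) hhF
    · intro x hx
      obtain ⟨hxa, hxb, hxc, hxd, hxh⟩ := (hmemD x).1 hx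
      have hxF : ¬(x = a ∨ x = b ∨ x = c ∨ x = d) := by tauto
      refine ⟨?_, ?_, ?_⟩
      · rw [hsym]; exact redout x a hxa hxF
      · rw [hsym]; exact redout x b hxb hxF
      · rw [hsym]; exact redout x c hxc hxF
    · intro x hx y hy z hz hyx hzx hyz ⟨u1, u2⟩
      obtain ⟨hxa, hxb, hxc, hxd, hxh⟩ := (hmemD x).1 hx
      have hxF : ¬(x = a ∨ x = b ∨ x = c ∨ x = d) := by tauto
      exact absurd u1 (by rw [redout x y (Ne.symm hyx) hxF]; simp)

/-- For `n ≥ 5`, any red/blue coloring of `K_{n+2}` (red = `true`) without a red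
kipas `K̂ₙ` contains a blue `2P₃`, a blue `P₅`, or a blue `P₄ ∪ P₂`. -/
theorem blue_2P3_or_P5_or_P4P2 (n : ℕ) (hn : 5 ≤ n)
    (χ : Fin (n+2) → Fin (n+2) → Bool) (hsym : ∀ u v, χ u v = χ v u)
    (hred : ¬ HasMonoCopy (kipas n) χ true) :
    (∃ a b c d e f : Fin (n+2), [a, b, c, d, e, f].Nodup ∧
      χ a b = false ∧ χ b c = false ∧ χ d e = false ∧ χ e f = false) ∨
    (∃ a b c d e : Fin (n+2), [a, b, c, d, e].Nodup ∧
      χ a b = false ∧ χ b c = false ∧ χ c d = false ∧ χ d e = false) ∨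
    (∃ a b c d e f : Fin (n+2), [a, b, c, d, e, f].Nodup ∧
      χ a b = false ∧ χ b c = false ∧ χ c d = false ∧ χ e f = false) := by
  by_contra hcon
  apply hred
  apply master n hn χ hsym
  · intro a b c d e hnd e1 e2 e3 e4
    exact hcon (Or.inr (Or.inl ⟨a, b, c, d, e, hnd, e1, e2, e3, e4⟩))
  · intro a b c d e f hnd e1 e2 e3 e4
    exact hcon (Or.inl ⟨a, b, c, d, e, f, hnd, e1, e2, e3, e4⟩)
  · intro a b c d e f hnd e1 e2 e3 e4
    exact hcon (Or.inr (Or.inr ⟨a, b, c, d, e, f, hnd, e1, e2, e3, e4⟩))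
end

section
/- For n ∈ {2, 3}, every edge-coloring of K_N with N = ⌊5n/2⌋ in the class 𝓑_3(N) contains a monochromatic copy of the kipas K̂_n, and there exists an edge-coloring of K_{⌊5n/2⌋−1} in 𝓑_3(⌊5n/2⌋−1) with no monochromatic K̂_n; hence b_3(K̂_n) = ⌊5n/2⌋. -/
open SimpleGraph Finset

/-- The class `𝓑₃(N)` of 3-edge-colorings of `K_N` (colors `1, 2, 3`): the vertices split into
two parts `A` and `B = Aᶜ`, each of size at least `2`; edges between `A` and `B` have color `1`,
edges inside `A` have color `1` or `3`, and edges inside `B` have color `1` or `2`. -/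
def B3Coloring {N : ℕ} (χ : Fin N → Fin N → ℕ) : Prop :=
  ∃ A : Finset (Fin N), 2 ≤ A.card ∧ 2 ≤ Aᶜ.card ∧
    (∀ u ∈ A, ∀ v ∈ Aᶜ, χ u v = 1) ∧
    (∀ u ∈ A, ∀ v ∈ A, u ≠ v → χ u v = 1 ∨ χ u v = 3) ∧
    (∀ u ∈ Aᶜ, ∀ v ∈ Aᶜ, u ≠ v → χ u v = 1 ∨ χ u v = 2)

lemma mono_triangle {M : ℕ} (χ : Fin M → Fin M → ℕ) (hsym : ∀ u v, χ u v = χ v u)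
    (x y z : Fin M) (hxy : x ≠ y) (hxz : x ≠ z) (hyz : y ≠ z) (c : ℕ)
    (h1 : χ x y = c) (h2 : χ x z = c) (h3 : χ y z = c) :
    HasMonoCopy (kipas 2) χ c := by
  refine ⟨⟨![x, y, z], ?_⟩, ?_⟩
  · intro i j h
    fin_cases i <;> fin_cases j <;>
      first
        | rfl
        | exact absurd h hxy | exact absurd h hxz | exact absurd h hyz
        | exact absurd h.symm hxy | exact absurd h.symm hxz | exact absurd h.symm hyz
  · intro a b hab
    fin_cases a <;> fin_cases b <;>
      first
        | exact absurd rfl hab.ne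
        | exact h1 | exact h2 | exact h3
        | exact (hsym y x).trans h1 | exact (hsym z x).trans h2 | exact (hsym z y).trans h3

lemma mono_kipas3 {M : ℕ} (χ : Fin M → Fin M → ℕ) (hsym : ∀ u v, χ u v = χ v u)
    (w x y z : Fin M) (hwx : w ≠ x) (hwy : w ≠ y) (hwz : w ≠ z)
    (hxy : x ≠ y) (hxz : x ≠ z) (hyz : y ≠ z) (c : ℕ)
    (e1 : χ w x = c) (e2 : χ x y = c) (e3 : χ w z = c) (e4 : χ x z = c) (e5 : χ y z = c) :
    HasMonoCopy (kipas 3) χ c := by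
  refine ⟨⟨![w, x, y, z], ?_⟩, ?_⟩
  · intro i j h
    fin_cases i <;> fin_cases j <;>
      first
        | rfl
        | exact absurd h hwx | exact absurd h hwy | exact absurd h hwz
        | exact absurd h hxy | exact absurd h hxz | exact absurd h hyz
        | exact absurd h.symm hwx | exact absurd h.symm hwy | exact absurd h.symm hwz
        | exact absurd h.symm hxy | exact absurd h.symm hxz | exact absurd h.symm hyz
  · intro a b hab
    fin_cases a <;> fin_cases b <;>
      first
        | exact absurd rfl hab.ne
        | exact e1 | exact e2 | exact e3 | exact e4 | exact e5
        | exact (hsym x w).trans e1 | exact (hsym y x).trans e2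
        | exact (hsym z w).trans e3 | exact (hsym z x).trans e4
        | exact (hsym z y).trans e5
        | simp [kipas, SimpleGraph.fromRel_adj] at hab

lemma exists3 {V : Type*} [DecidableEq V] {s : Finset V} (h : 3 ≤ s.card) :
    ∃ a ∈ s, ∃ b ∈ s, ∃ c ∈ s, a ≠ b ∧ a ≠ c ∧ b ≠ c := by
  obtain ⟨a, ha⟩ := Finset.card_pos.mp (show 0 < s.card by omega)
  have h2 : 1 < (s.erase a).card := by rw [Finset.card_erase_of_mem ha]; omega
  obtain ⟨b, hb, c, hc, hbc⟩ := Finset.one_lt_card.mp h2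
  exact ⟨a, ha, b, (Finset.mem_erase.mp hb).2, c, (Finset.mem_erase.mp hc).2,
    fun e => (Finset.mem_erase.mp hb).1 e.symm,
    fun e => (Finset.mem_erase.mp hc).1 e.symm, hbc⟩

lemma exists4 {V : Type*} [DecidableEq V] {s : Finset V} (h : 4 ≤ s.card) :
    ∃ a ∈ s, ∃ b ∈ s, ∃ c ∈ s, ∃ d ∈ s,
      a ≠ b ∧ a ≠ c ∧ a ≠ d ∧ b ≠ c ∧ b ≠ d ∧ c ≠ d := by
  obtain ⟨a, ha⟩ := Finset.card_pos.mp (show 0 < s.card by omega)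
  have h3 : 3 ≤ (s.erase a).card := by rw [Finset.card_erase_of_mem ha]; omega
  obtain ⟨b, hb, c, hc, d, hd, hbc, hbd, hcd⟩ := exists3 h3
  exact ⟨a, ha, b, (Finset.mem_erase.mp hb).2, c, (Finset.mem_erase.mp hc).2,
    d, (Finset.mem_erase.mp hd).2,
    fun e => (Finset.mem_erase.mp hb).1 e.symm,
    fun e => (Finset.mem_erase.mp hc).1 e.symm,
    fun e => (Finset.mem_erase.mp hd).1 e.symm, hbc, hbd, hcd⟩

lemma pos2 (M : ℕ) (hM : 5 ≤ M) (χ : Fin M → Fin M → ℕ)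
    (hsym : ∀ u v, χ u v = χ v u) (hB : B3Coloring χ) :
    ∃ c, HasMonoCopy (kipas 2) χ c := by
  obtain ⟨A, hA, hAc, hcross, hinA, hinB⟩ := hB
  have hne : ∀ u ∈ A, ∀ v ∈ Aᶜ, u ≠ v := by
    intro u hu v hv e; exact (Finset.mem_compl.mp hv) (e ▸ hu)
  by_cases h1 : ∃ u ∈ A, ∃ v ∈ A, u ≠ v ∧ χ u v = 1
  · obtain ⟨u, hu, v, hv, huv, he⟩ := h1
    obtain ⟨b, hb⟩ := Finset.card_pos.mp (show 0 < Aᶜ.card by omega)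
    exact ⟨1, mono_triangle χ hsym u v b huv (hne u hu b hb) (hne v hv b hb) 1
      he (hcross u hu b hb) (hcross v hv b hb)⟩
  by_cases h2 : ∃ u ∈ Aᶜ, ∃ v ∈ Aᶜ, u ≠ v ∧ χ u v = 1
  · obtain ⟨u, hu, v, hv, huv, he⟩ := h2
    obtain ⟨a, ha⟩ := Finset.card_pos.mp (show 0 < A.card by omega)
    exact ⟨1, mono_triangle χ hsym u v a huv (fun e => hne a ha u hu e.symm)
      (fun e => hne a ha v hv e.symm) 1 he
      ((hsym u a).trans (hcross a ha u hu)) ((hsym v a).trans (hcross a ha v hv))⟩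
  · push_neg at h1 h2
    have hsum : A.card + Aᶜ.card = M := by
      simpa using Finset.card_add_card_compl A
    rcases (show 3 ≤ A.card ∨ 3 ≤ Aᶜ.card by omega) with h | h
    · obtain ⟨a, ha, b, hb, c, hc, hab, hac, hbc⟩ := exists3 h
      refine ⟨3, mono_triangle χ hsym a b c hab hac hbc 3 ?_ ?_ ?_⟩
      · exact ((hinA a ha b hb hab).resolve_left (h1 a ha b hb hab))
      · exact ((hinA a ha c hc hac).resolve_left (h1 a ha c hc hac))
      · exact ((hinA b hb c hc hbc).resolve_left (h1 b hb c hc hbc))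
    · obtain ⟨a, ha, b, hb, c, hc, hab, hac, hbc⟩ := exists3 h
      refine ⟨2, mono_triangle χ hsym a b c hab hac hbc 2 ?_ ?_ ?_⟩
      · exact ((hinB a ha b hb hab).resolve_left (h2 a ha b hb hab))
      · exact ((hinB a ha c hc hac).resolve_left (h2 a ha c hc hac))
      · exact ((hinB b hb c hc hbc).resolve_left (h2 b hb c hc hbc))

lemma pos3 (M : ℕ) (hM : 7 ≤ M) (χ : Fin M → Fin M → ℕ)
    (hsym : ∀ u v, χ u v = χ v u) (hB : B3Coloring χ) :
    ∃ c, HasMonoCopy (kipas 3) χ c := by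
  obtain ⟨A, hA, hAc, hcross, hinA, hinB⟩ := hB
  have hne : ∀ u ∈ A, ∀ v ∈ Aᶜ, u ≠ v := by
    intro u hu v hv e; exact (Finset.mem_compl.mp hv) (e ▸ hu)
  by_cases h1 : ∃ u ∈ A, ∃ v ∈ A, u ≠ v ∧ χ u v = 1
  · obtain ⟨u, hu, v, hv, huv, he⟩ := h1
    obtain ⟨b1, hb1, b2, hb2, hb⟩ := Finset.one_lt_card.mp (show 1 < Aᶜ.card by omega)
    -- copy: w = b1, x = u, y = b2, z = v
    refine ⟨1, mono_kipas3 χ hsym b1 u b2 v (fun e => hne u hu b1 hb1 e.symm) hb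
      (fun e => hne v hv b1 hb1 e.symm) (hne u hu b2 hb2) huv
      (fun e => hne v hv b2 hb2 e.symm) 1
      ((hsym b1 u).trans (hcross u hu b1 hb1)) (hcross u hu b2 hb2)
      ((hsym b1 v).trans (hcross v hv b1 hb1)) he
      ((hsym b2 v).trans (hcross v hv b2 hb2))⟩
  by_cases h2 : ∃ u ∈ Aᶜ, ∃ v ∈ Aᶜ, u ≠ v ∧ χ u v = 1
  · obtain ⟨u, hu, v, hv, huv, he⟩ := h2
    obtain ⟨a1, ha1, a2, ha2, ha⟩ := Finset.one_lt_card.mp (show 1 < A.card by omega)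
    refine ⟨1, mono_kipas3 χ hsym a1 u a2 v (hne a1 ha1 u hu) ha
      (hne a1 ha1 v hv) (fun e => hne a2 ha2 u hu e.symm) huv
      (hne a2 ha2 v hv) 1
      (hcross a1 ha1 u hu) ((hsym u a2).trans (hcross a2 ha2 u hu))
      (hcross a1 ha1 v hv) he (hcross a2 ha2 v hv)⟩
  · push_neg at h1 h2
    have hsum : A.card + Aᶜ.card = M := by
      simpa using Finset.card_add_card_compl A
    rcases (show 4 ≤ A.card ∨ 4 ≤ Aᶜ.card by omega) with h | h
    · obtain ⟨a, ha, b, hb, c, hc, d, hd, hab, hac, had, hbc, hbd, hcd⟩ := exists4 h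
      exact ⟨3, mono_kipas3 χ hsym a b c d hab hac had hbc hbd hcd 3
        ((hinA a ha b hb hab).resolve_left (h1 a ha b hb hab))
        ((hinA b hb c hc hbc).resolve_left (h1 b hb c hc hbc))
        ((hinA a ha d hd had).resolve_left (h1 a ha d hd had))
        ((hinA b hb d hd hbd).resolve_left (h1 b hb d hd hbd))
        ((hinA c hc d hd hcd).resolve_left (h1 c hc d hd hcd))⟩
    · obtain ⟨a, ha, b, hb, c, hc, d, hd, hab, hac, had, hbc, hbd, hcd⟩ := exists4 h
      exact ⟨2, mono_kipas3 χ hsym a b c d hab hac had hbc hbd hcd 2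
        ((hinB a ha b hb hab).resolve_left (h2 a ha b hb hab))
        ((hinB b hb c hc hbc).resolve_left (h2 b hb c hc hbc))
        ((hinB a ha d hd had).resolve_left (h2 a ha d hd had))
        ((hinB b hb d hd hbd).resolve_left (h2 b hb d hd hbd))
        ((hinB c hc d hd hcd).resolve_left (h2 c hc d hd hcd))⟩

def χ4 : Fin 4 → Fin 4 → ℕ := fun u v =>
  if u.val < 2 ∧ v.val < 2 then 3 else if ¬ u.val < 2 ∧ ¬ v.val < 2 then 2 else 1

def χ6 : Fin 6 → Fin 6 → ℕ := fun u v =>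
  if u.val < 3 ∧ v.val < 3 then 3 else if ¬ u.val < 3 ∧ ¬ v.val < 3 then 2 else 1

lemma χ4_sym : ∀ u v, χ4 u v = χ4 v u := by decide
lemma χ6_sym : ∀ u v, χ6 u v = χ6 v u := by decide

lemma χ4_B3 : B3Coloring χ4 := by
  refine ⟨Finset.filter (fun v => v.val < 2) Finset.univ, ?_, ?_, ?_, ?_, ?_⟩ <;> decide

lemma χ6_B3 : B3Coloring χ6 := by
  refine ⟨Finset.filter (fun v => v.val < 3) Finset.univ, ?_, ?_, ?_, ?_, ?_⟩ <;> decide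

lemma χ4_no_mono : ¬ ∃ c, HasMonoCopy (kipas 2) χ4 c := by
  rintro ⟨c, f, hf⟩
  have key : ∀ x y z : Fin 4, x ≠ y → x ≠ z → y ≠ z →
      ¬ (χ4 x y = χ4 x z ∧ χ4 x y = χ4 y z) := by decide
  have d01 : (kipas 2).Adj 0 1 := by
    rw [kipas, SimpleGraph.fromRel_adj]; exact ⟨by decide, Or.inl (Or.inl (by decide))⟩
  have d02 : (kipas 2).Adj 0 2 := by
    rw [kipas, SimpleGraph.fromRel_adj]; exact ⟨by decide, Or.inl (Or.inr (by decide))⟩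
  have d12 : (kipas 2).Adj 1 2 := by
    rw [kipas, SimpleGraph.fromRel_adj]; exact ⟨by decide, Or.inl (Or.inr (by decide))⟩
  have h01 := hf 0 1 d01
  have h02 := hf 0 2 d02
  have h12 := hf 1 2 d12
  exact key (f 0) (f 1) (f 2)
    (fun e => absurd (f.injective e) (by decide))
    (fun e => absurd (f.injective e) (by decide))
    (fun e => absurd (f.injective e) (by decide))
    ⟨h01.trans h02.symm, h01.trans h12.symm⟩

lemma χ6_no_mono : ¬ ∃ c, HasMonoCopy (kipas 3) χ6 c := by
  rintro ⟨c, f, hf⟩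
  have key : ∀ w x y z : Fin 6, w ≠ x → w ≠ y → w ≠ z → x ≠ y → x ≠ z → y ≠ z →
      ¬ (χ6 w x = χ6 x y ∧ χ6 w x = χ6 w z ∧ χ6 w x = χ6 x z ∧ χ6 w x = χ6 y z) := by
    decide
  have d01 : (kipas 3).Adj 0 1 := by
    rw [kipas, SimpleGraph.fromRel_adj]; exact ⟨by decide, Or.inl (Or.inl (by decide))⟩
  have d12 : (kipas 3).Adj 1 2 := by
    rw [kipas, SimpleGraph.fromRel_adj]; exact ⟨by decide, Or.inl (Or.inl (by decide))⟩
  have d03 : (kipas 3).Adj 0 3 := by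
    rw [kipas, SimpleGraph.fromRel_adj]; exact ⟨by decide, Or.inl (Or.inr (by decide))⟩
  have d13 : (kipas 3).Adj 1 3 := by
    rw [kipas, SimpleGraph.fromRel_adj]; exact ⟨by decide, Or.inl (Or.inr (by decide))⟩
  have d23 : (kipas 3).Adj 2 3 := by
    rw [kipas, SimpleGraph.fromRel_adj]; exact ⟨by decide, Or.inl (Or.inr (by decide))⟩
  have h01 := hf 0 1 d01
  have h12 := hf 1 2 d12
  have h03 := hf 0 3 d03
  have h13 := hf 1 3 d13
  have h23 := hf 2 3 d23
  exact key (f 0) (f 1) (f 2) (f 3)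
    (fun e => absurd (f.injective e) (by decide))
    (fun e => absurd (f.injective e) (by decide))
    (fun e => absurd (f.injective e) (by decide))
    (fun e => absurd (f.injective e) (by decide))
    (fun e => absurd (f.injective e) (by decide))
    (fun e => absurd (f.injective e) (by decide))
    ⟨h01.trans h12.symm, h01.trans h03.symm, h01.trans h13.symm, h01.trans h23.symm⟩

/-- For `n ∈ {2, 3}`: every coloring of `K_{⌊5n/2⌋}` in `𝓑₃` contains a
monochromatic kipas `K̂ₙ`; there is a coloring of `K_{⌊5n/2⌋ - 1}` in `𝓑₃` with no
monochromatic `K̂ₙ`; hence `b₃(K̂ₙ) = ⌊5n/2⌋`. -/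
theorem b3_kipas_small (n : ℕ) (hn : n = 2 ∨ n = 3) :
    (∀ χ : Fin (5 * n / 2) → Fin (5 * n / 2) → ℕ,
      (∀ u v, χ u v = χ v u) → B3Coloring χ → ∃ c, HasMonoCopy (kipas n) χ c) ∧
    (∃ χ : Fin (5 * n / 2 - 1) → Fin (5 * n / 2 - 1) → ℕ,
      (∀ u v, χ u v = χ v u) ∧ B3Coloring χ ∧ ¬ ∃ c, HasMonoCopy (kipas n) χ c) ∧
    IsLeast {N : ℕ | ∀ M, N ≤ M → ∀ χ : Fin M → Fin M → ℕ,
        (∀ u v, χ u v = χ v u) → B3Coloring χ →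
        ∃ c, HasMonoCopy (kipas n) χ c} (5 * n / 2) := by
  rcases hn with rfl | rfl
  · refine ⟨fun χ hs hB => pos2 _ (by norm_num) χ hs hB,
      ⟨χ4, χ4_sym, χ4_B3, χ4_no_mono⟩,
      ⟨fun M hM χ hs hB => pos2 M (by omega) χ hs hB, ?_⟩⟩
    intro N hN
    by_contra h
    push_neg at h
    exact χ4_no_mono (hN 4 (by omega) χ4 χ4_sym χ4_B3)
  · refine ⟨fun χ hs hB => pos3 _ (by norm_num) χ hs hB,
      ⟨χ6, χ6_sym, χ6_B3, χ6_no_mono⟩,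
      ⟨fun M hM χ hs hB => pos3 M (by omega) χ hs hB, ?_⟩⟩
    intro N hN
    by_contra h
    push_neg at h
    exact χ6_no_mono (hN 6 (by omega) χ6 χ6_sym χ6_B3)
end

section
/- For every n ≥ 5 and odd n, there is a 3-edge-coloring of K_{⌊5n/2⌋−1} in the class 𝓑_3 with no monochromatic kipas K̂_n. Concretely: partition the vertices into A, B_1, B_2, B_3 with |A| = n and |B_1| = |B_2| = |B_3| = (n−1)/2; color all edges inside A with color 3, all edges between A and B_1∪B_2∪B_3 with color 1, all edges between distinct B_i's with color 2, and all edges inside each B_i with color 1. Then this coloring contains no monochromatic K̂_n. -/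
open SimpleGraph Finset

theorem no_consec_card {n : ℕ} (S : Finset ℕ) (hlt : ∀ s ∈ S, s < n)
    (h : ∀ s ∈ S, s + 1 ∉ S) : S.card ≤ (n + 1) / 2 := by
  have key : S.card ≤ (Finset.range ((n + 1) / 2)).card := by
    apply Finset.card_le_card_of_injOn (fun s => s / 2)
    · intro s hs
      simp only [Finset.mem_coe, Finset.mem_range]
      have := hlt s hs
      omega
    · intro s hs t ht hst
      simp only at hst
      by_contra hne
      rcases Nat.lt_or_ge s t with h1 | h1
      · have ht' : t = s + 1 := by omega
        exact h s hs (ht' ▸ ht)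
      · have hs' : s = t + 1 := by omega
        exact h t ht (hs' ▸ hs)
  simpa using key

/-- For odd `n ≥ 5`, partition the `⌊5n/2⌋ - 1` vertices into parts `A` (the
fiber of `Q` over `0`, of size `n`) and `B₁, B₂, B₃` (fibers over `1, 2, 3`, each of size
`(n-1)/2`); color edges inside `A` with `3`, edges meeting `A` and its complement with `1`,
edges between distinct `Bᵢ`'s with `2`, and edges inside each `Bᵢ` with `1`. This coloring lies
in `𝓑₃` and has no monochromatic kipas `K̂ₙ`. -/
theorem b3_kipas_lower_construction (n : ℕ) (hn : 5 ≤ n) (hodd : Odd n)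
    (Q : Fin (5 * n / 2 - 1) → Fin 4)
    (hA : (Finset.univ.filter (fun v => Q v = 0)).card = n)
    (hB : ∀ i : Fin 4, i ≠ 0 → (Finset.univ.filter (fun v => Q v = i)).card = (n - 1) / 2)
    (χ : Fin (5 * n / 2 - 1) → Fin (5 * n / 2 - 1) → ℕ)
    (hχ : ∀ u v, u ≠ v → χ u v =
      if Q u = 0 ∧ Q v = 0 then 3
      else if Q u = 0 ∨ Q v = 0 then 1
      else if Q u = Q v then 1
      else 2) :
    B3Coloring χ ∧ ¬ ∃ c, HasMonoCopy (kipas n) χ c := by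
  obtain ⟨m, hm⟩ := hodd
  have hm2 : 2 ≤ m := by omega
  have hfiber : ∀ i : Fin 4, i ≠ 0 →
      (Finset.univ.filter (fun v => Q v = i)).card = m := by
    intro i hi
    rw [hB i hi]
    omega
  constructor
  · refine ⟨Finset.univ.filter (fun v => Q v = 0), ?_, ?_, ?_, ?_, ?_⟩
    · rw [hA]; omega
    · rw [Finset.card_compl, hA, Fintype.card_fin]; omega
    · intro u hu v hv
      simp only [Finset.mem_filter, Finset.mem_compl, Finset.mem_univ, true_and] at hu hv
      have huv : u ≠ v := fun h => hv (h ▸ hu)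
      rw [hχ u v huv, if_neg (by tauto), if_pos (Or.inl hu)]
    · intro u hu v hv huv
      simp only [Finset.mem_filter, Finset.mem_univ, true_and] at hu hv
      rw [hχ u v huv, if_pos ⟨hu, hv⟩]
      right; rfl
    · intro u hu v hv huv
      simp only [Finset.mem_compl, Finset.mem_filter, Finset.mem_univ, true_and] at hu hv
      rw [hχ u v huv, if_neg (by tauto), if_neg (by tauto)]
      split <;> simp
  · rintro ⟨c, f, hf⟩
    obtain ⟨g, hgv⟩ : ∃ g : ℕ → Fin (n + 1), ∀ j, (g j).val = min j n :=
      ⟨fun j => ⟨min j n, by omega⟩, fun j => rfl⟩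
    have hg_ne : ∀ a b : ℕ, a ≤ n → b ≤ n → a ≠ b → g a ≠ g b := by
      intro a b ha hb hab h
      have := congrArg Fin.val h
      simp only [hgv] at this
      omega
    have hadj_spoke : ∀ j, j < n → (kipas n).Adj (g j) (g n) := by
      intro j hj
      rw [kipas, SimpleGraph.fromRel_adj]
      refine ⟨hg_ne j n (by omega) le_rfl (by omega), Or.inl (Or.inr ?_)⟩
      constructor <;> simp only [hgv] <;> omega
    have hadj_path : ∀ j, j + 1 < n → (kipas n).Adj (g j) (g (j + 1)) := by
      intro j hj
      rw [kipas, SimpleGraph.fromRel_adj]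
      refine ⟨hg_ne j (j + 1) (by omega) (by omega) (by omega), Or.inl (Or.inl ?_)⟩
      constructor <;> simp only [hgv] <;> omega
    have hne : ∀ a b : ℕ, a ≤ n → b ≤ n → a ≠ b → f (g a) ≠ f (g b) :=
      fun a b ha hb hab => f.injective.ne (hg_ne a b ha hb hab)
    have hspoke : ∀ j, j < n → (if Q (f (g j)) = 0 ∧ Q (f (g n)) = 0 then 3
        else if Q (f (g j)) = 0 ∨ Q (f (g n)) = 0 then 1
        else if Q (f (g j)) = Q (f (g n)) then 1 else 2) = c := by
      intro j hj
      rw [← hχ _ _ (hne j n (by omega) le_rfl (by omega))]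
      exact hf _ _ (hadj_spoke j hj)
    have hpath : ∀ j, j + 1 < n → (if Q (f (g j)) = 0 ∧ Q (f (g (j + 1))) = 0 then 3
        else if Q (f (g j)) = 0 ∨ Q (f (g (j + 1))) = 0 then 1
        else if Q (f (g j)) = Q (f (g (j + 1))) then 1 else 2) = c := by
      intro j hj
      rw [← hχ _ _ (hne j (j + 1) (by omega) (by omega) (by omega))]
      exact hf _ _ (hadj_path j hj)
    have himg : ∀ s : Finset ℕ, (∀ j ∈ s, j ≤ n) →
        (s.image (fun j => f (g j))).card = s.card := by
      intro s hs
      apply Finset.card_image_of_injOn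
      intro a ha b hb hab
      by_contra hne'
      exact hne a b (hs a ha) (hs b hb) hne' hab
    have hc : c = 1 ∨ c = 2 ∨ c = 3 := by
      have := hspoke 0 (by omega)
      split_ifs at this <;> omega
    rcases hc with hc | hc | hc
    · -- c = 1
      subst hc
      by_cases hi0 : Q (f (g n)) = 0
      · have hnz : ∀ j, j < n → Q (f (g j)) ≠ 0 := by
          intro j hj h0
          have := hspoke j hj
          rw [if_pos ⟨h0, hi0⟩] at this
          omega
        have heq : ∀ j, j < n → Q (f (g j)) = Q (f (g 0)) := by
          intro j
          induction j with
          | zero => intro _; rfl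
          | succ k ih =>
            intro hk
            have hk' : k < n := by omega
            have h1 := hpath k hk
            rw [if_neg (fun hcc => (hnz k hk') hcc.1),
                if_neg (by push_neg; exact ⟨hnz k hk', hnz (k + 1) hk⟩)] at h1
            split_ifs at h1 with h2
            · rw [← h2]; exact ih hk'
            · omega
        have hsub : (Finset.range n).image (fun j => f (g j)) ⊆
            Finset.univ.filter (fun v => Q v = Q (f (g 0))) := by
          intro v hv
          simp only [Finset.mem_image, Finset.mem_range] at hv
          obtain ⟨j, hj, rfl⟩ := hv
          simp only [Finset.mem_filter, Finset.mem_univ, true_and]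
          exact heq j hj
        have hcard := Finset.card_le_card hsub
        rw [himg _ (fun j hj => by simp only [Finset.mem_range] at hj; omega),
            Finset.card_range, hfiber _ (hnz 0 (by omega))] at hcard
        omega
      · have hmem : ∀ j, j < n → Q (f (g j)) = 0 ∨ Q (f (g j)) = Q (f (g n)) := by
          intro j hj
          have := hspoke j hj
          split_ifs at this with h1 h2 h3
          · omega
          · rcases h2 with h | h
            · exact Or.inl h
            · exact absurd h hi0
          · exact Or.inr h3
          · omega
        have hnoconsec : ∀ j, j + 1 < n →
            ¬(Q (f (g j)) = 0 ∧ Q (f (g (j + 1))) = 0) := by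
          intro j hj hcon
          have := hpath j hj
          rw [if_pos hcon] at this
          omega
        have hScard : ((Finset.range n).filter (fun j => Q (f (g j)) = 0)).card ≤
            (n + 1) / 2 := by
          apply no_consec_card _ (fun s hs => (Finset.mem_range.mp (Finset.mem_of_mem_filter s hs)))
          intro s hs hs1
          simp only [Finset.mem_filter, Finset.mem_range] at hs hs1
          exact hnoconsec s hs1.1 ⟨hs.2, hs1.2⟩
        have hdisj : Disjoint ((Finset.range n).filter (fun j => Q (f (g j)) = 0))
            ((Finset.range n).filter (fun j => Q (f (g j)) = Q (f (g n)))) := by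
          rw [Finset.disjoint_left]
          intro a h1 h2
          simp only [Finset.mem_filter, Finset.mem_range] at h1 h2
          exact hi0 (by rw [← h2.2, h1.2])
        have hunion : ((Finset.range n).filter (fun j => Q (f (g j)) = 0)) ∪
            ((Finset.range n).filter (fun j => Q (f (g j)) = Q (f (g n)))) =
            Finset.range n := by
          ext a
          simp only [Finset.mem_union, Finset.mem_filter, Finset.mem_range]
          constructor
          · tauto
          · intro ha
            rcases hmem a ha with h | h <;> tauto
        have hsplit : ((Finset.range n).filter (fun j => Q (f (g j)) = 0)).card +
            ((Finset.range n).filter (fun j => Q (f (g j)) = Q (f (g n)))).card = n := by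
          rw [← Finset.card_union_of_disjoint hdisj, hunion, Finset.card_range]
        have hsub : ((insert n ((Finset.range n).filter
              (fun j => Q (f (g j)) = Q (f (g n))))).image (fun j => f (g j))) ⊆
            Finset.univ.filter (fun v => Q v = Q (f (g n))) := by
          intro v hv
          simp only [Finset.mem_image, Finset.mem_insert, Finset.mem_filter,
            Finset.mem_range, Finset.mem_univ, true_and] at hv ⊢
          obtain ⟨j, hj, rfl⟩ := hv
          rcases hj with rfl | hj
          · rfl
          · exact hj.2
        have hcard := Finset.card_le_card hsub
        rw [himg _ (by
              intro j hj
              simp only [Finset.mem_insert, Finset.mem_filter, Finset.mem_range] at hj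
              rcases hj with rfl | hj
              · exact le_rfl
              · omega),
            Finset.card_insert_of_notMem (by
              simp only [Finset.mem_filter, Finset.mem_range]
              intro h
              exact absurd h.1 (lt_irrefl n)),
            hfiber _ hi0] at hcard
        omega
    · -- c = 2
      subst hc
      have hi0 : Q (f (g n)) ≠ 0 := by
        intro h
        have := hspoke 0 (by omega)
        split_ifs at this with h1 h2 h3 <;> first | omega | exact h2 (Or.inr h)
      have hmem : ∀ j, j < n → Q (f (g j)) ≠ 0 ∧ Q (f (g j)) ≠ Q (f (g n)) := by
        intro j hj
        have := hspoke j hj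
        split_ifs at this with h1 h2 h3
        · omega
        · omega
        · omega
        · push_neg at h2
          exact ⟨h2.1, h3⟩
      have hTcard : (Finset.univ.filter
          (fun v => Q v ≠ 0 ∧ Q v ≠ Q (f (g n)))).card = 2 * m := by
        have heq2 : Finset.univ.filter (fun v => Q v ≠ 0 ∧ Q v ≠ Q (f (g n))) =
            (Finset.univ.filter (fun v => Q v = 0) ∪
              Finset.univ.filter (fun v => Q v = Q (f (g n))))ᶜ := by
          ext v
          simp [not_or]
        rw [heq2, Finset.card_compl, Finset.card_union_of_disjoint (by
              rw [Finset.disjoint_left]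
              intro a h1 h2
              simp only [Finset.mem_filter, Finset.mem_univ, true_and] at h1 h2
              exact hi0 (by rw [← h2, h1])),
            hA, hfiber _ hi0, Fintype.card_fin]
        omega
      have hsub : (Finset.range n).image (fun j => f (g j)) ⊆
          Finset.univ.filter (fun v => Q v ≠ 0 ∧ Q v ≠ Q (f (g n))) := by
        intro v hv
        simp only [Finset.mem_image, Finset.mem_range] at hv
        obtain ⟨j, hj, rfl⟩ := hv
        simp only [Finset.mem_filter, Finset.mem_univ, true_and]
        exact hmem j hj
      have hcard := Finset.card_le_card hsub
      rw [himg _ (fun j hj => by simp only [Finset.mem_range] at hj; omega),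
          Finset.card_range, hTcard] at hcard
      omega
    · -- c = 3
      subst hc
      have hall : ∀ j, j ≤ n → Q (f (g j)) = 0 := by
        intro j hj
        rcases Nat.eq_or_lt_of_le hj with rfl | hj'
        · have := hspoke 0 (by omega)
          split_ifs at this with h1 h2 h3 <;> first | exact h1.2 | omega
        · have := hspoke j hj'
          split_ifs at this with h1 h2 h3 <;> first | exact h1.1 | omega
      have hsub : (Finset.range (n + 1)).image (fun j => f (g j)) ⊆
          Finset.univ.filter (fun v => Q v = 0) := by
        intro v hv
        simp only [Finset.mem_image, Finset.mem_range] at hv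
        obtain ⟨j, hj, rfl⟩ := hv
        simp only [Finset.mem_filter, Finset.mem_univ, true_and]
        exact hall j (by omega)
      have hcard := Finset.card_le_card hsub
      rw [himg _ (fun j hj => by simp only [Finset.mem_range] at hj; omega),
          Finset.card_range, hA] at hcard
      omega
end

section
/- Let N = n + ⌈m/2⌉ − 1 with 2 ≤ m ≤ n/2. Color the edges of K_N by partitioning the vertices into A with |A| = n and B with |B| = ⌈m/2⌉ − 1, coloring all edges within A red and all other edges blue. Then this coloring contains no red kipas K̂_n and no blue linear forest with at least m edges. -/
open SimpleGraph Finset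

lemma key_chain {V : Type*} [DecidableEq V] (A : Finset V) :
    ∀ p : List V, p.Chain' (fun u v => ¬(u ∈ A ∧ v ∈ A)) →
      p.length ≤ 2 * p.countP (fun v => decide (v ∉ A)) + 1
  | [], _ => by simp
  | [_], _ => by simp
  | a :: b :: rest, h => by
    obtain ⟨hab, h2⟩ := List.isChain_cons_cons.mp h
    by_cases ha : a ∈ A
    · have hb : b ∉ A := fun hb => hab ⟨ha, hb⟩
      have := key_chain A rest h2.tail
      simp only [List.countP_cons, List.length_cons, ha, hb, decide_not] at *
      simp_all
      omega
    · have := key_chain A (b :: rest) h2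
      simp only [List.countP_cons, List.length_cons, ha, decide_not] at *
      simp_all
      omega

/-- For `2 ≤ m ≤ n/2` and `N = n + ⌈m/2⌉ - 1`, the coloring of `K_N` in which
the edges inside a fixed `n`-set `A` are red (`true`) and all other edges are blue (`false`)
contains no red kipas `K̂ₙ` and no blue linear forest with at least `m` edges. -/
theorem kipas_linearForest_lower_construction (n m : ℕ) (hm2 : 2 ≤ m) (hmn : 2 * m ≤ n)
    (A : Finset (Fin (n + (m + 1) / 2 - 1))) (hA : A.card = n)
    (χ : Fin (n + (m + 1) / 2 - 1) → Fin (n + (m + 1) / 2 - 1) → Bool)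
    (hχ : ∀ u v, χ u v = true ↔ (u ∈ A ∧ v ∈ A)) :
    ¬ HasMonoCopy (kipas n) χ true ∧ ¬ HasMonoLinearForest χ false 2 m := by
  have hn4 : 4 ≤ n := by omega
  have hN : n ≤ n + (m + 1) / 2 - 1 := by omega
  constructor
  · rintro ⟨f, hf⟩
    set hub : Fin (n + 1) := ⟨n, by omega⟩ with hhub
    have hall : ∀ i : Fin (n + 1), f i ∈ A := by
      have key : ∀ i : Fin (n + 1), i.val < n → f i ∈ A ∧ f hub ∈ A := by
        intro i hi
        have hadj : (kipas n).Adj i hub := by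
          rw [kipas, SimpleGraph.fromRel_adj]
          exact ⟨fun h => by rw [h] at hi; simp [hhub] at hi, Or.inl (Or.inr ⟨hi, rfl⟩)⟩
        have := hf i hub hadj
        rw [hχ] at this
        exact this
      intro i
      by_cases hi : i.val < n
      · exact (key i hi).1
      · have hlt := i.isLt
        have : i = hub := Fin.ext (by simp only [hhub]; omega)
        rw [this]
        exact (key ⟨0, by omega⟩ (show (0:ℕ) < n by omega)).2
    have hsub : Finset.univ.image f ⊆ A := by
      intro x hx
      obtain ⟨i, _, rfl⟩ := Finset.mem_image.mp hx
      exact hall i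
    have := Finset.card_le_card hsub
    rw [Finset.card_image_of_injective _ f.injective, Finset.card_univ,
      Fintype.card_fin, hA] at this
    omega
  · rintro ⟨paths, hnd, _, hch, hsum⟩
    have hper : ∀ p ∈ paths, p.length - 1 ≤ 2 * p.countP (fun v => decide (v ∉ A)) := by
      intro p hp
      have hc : p.Chain' (fun u v => ¬(u ∈ A ∧ v ∈ A)) :=
        (hch p hp).imp (fun u v h hmem => by rw [← hχ u v] at hmem; simp [h] at hmem)
      have := key_chain A p hc
      omega
    have hsum2 : (paths.map (fun p => p.length - 1)).sum ≤
        (paths.map (fun p => 2 * p.countP (fun v => decide (v ∉ A)))).sum :=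
      List.sum_le_sum hper
    have hsum3 : ∀ l : List (List (Fin (n + (m + 1) / 2 - 1))),
        (l.map (fun p => 2 * p.countP (fun v => decide (v ∉ A)))).sum
          = 2 * (l.map (fun p => p.countP (fun v => decide (v ∉ A)))).sum := by
      intro l
      induction l with
      | nil => simp
      | cons a t ih => simp only [List.map_cons, List.sum_cons, ih, Nat.mul_add]
    have hflat : (paths.map (fun p => p.countP (fun v => decide (v ∉ A)))).sum
        = paths.flatten.countP (fun v => decide (v ∉ A)) :=
      (List.countP_flatten).symm
    have hcount : paths.flatten.countP (fun v => decide (v ∉ A)) ≤ Aᶜ.card := by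
      rw [List.countP_eq_length_filter]
      have hnd' : (paths.flatten.filter (fun v => decide (v ∉ A))).Nodup := hnd.filter _
      rw [← List.toFinset_card_of_nodup hnd']
      apply Finset.card_le_card
      intro v hv
      have := List.of_mem_filter (List.mem_toFinset.mp hv)
      simp only [decide_eq_true_eq] at this
      simpa using this
    have hAc : Aᶜ.card = (n + (m + 1) / 2 - 1) - n := by
      rw [Finset.card_compl, Fintype.card_fin, hA]
    have := hsum3 paths
    omega
end
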